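/- Let L̄ = L/⟨ι⟩ (a 28-element set), and call a 3-element subset of L̄ liftable if it is the image of a triangle in L (a 3-subset of L with pairwise inner products equal to 1). Then there exists a collection R̄ consisting of exactly 315 four-element subsets of L̄ with the property that a 3-element subset of L̄ is liftable if and only if it is contained in some member of R̄. -/

import Mathlib

/-- The lattice ℤ⁸. -/
abbrev V : Type := Fin 8 → ℤ

/-- The bilinear form with Gram matrix diag(1,−1,…,−1). -/
def B (v w : V) : ℤ := v 0 * w 0 - ∑ i : Fin 7, v i.succ * w i.succ

/-- The class h = (3,−1,…,−1) with ⟨h,h⟩ = 2. -/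
def hh : V := ![3, -1, -1, -1, -1, -1, -1, -1]

/-- The involution ι(v) = ⟨v,h⟩·h − v. -/
def iota (v : V) : V := B v hh • hh - v

/-- L = {v : ⟨v,v⟩ = −1, ⟨v,h⟩ = 1}. -/
def L : Set V := {v | B v v = -1 ∧ B v hh = 1}

/-- F = {v : ⟨v,v⟩ = 0, ⟨v,h⟩ = 2}. -/
def F : Set V := {v | B v v = 0 ∧ B v hh = 2}

/-- L̄ = L/⟨ι⟩, realized as the set of ι-orbits. -/
def Lbar : Set (Set V) := {p | ∃ v ∈ L, p = {v, iota v}}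

/-- F̄ = F/⟨ι⟩, realized as the set of ι-orbits. -/
def Fbar : Set (Set V) := {p | ∃ v ∈ F, p = {v, iota v}}

/-- G = {g ∈ GL₈(ℤ) : g preserves B and g(h) = h}. -/
def G : Subgroup (V ≃ₗ[ℤ] V) where
  carrier := {g | (∀ v w : V, B (g v) (g w) = B v w) ∧ g hh = hh}
  one_mem' := ⟨fun _ _ => rfl, rfl⟩
  mul_mem' := by
    rintro a b ⟨ha1, ha2⟩ ⟨hb1, hb2⟩
    refine ⟨fun v w => ?_, ?_⟩
    · show B (a (b v)) (a (b w)) = B v w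
      rw [ha1, hb1]
    · show a (b hh) = hh
      rw [hb2, ha2]
  inv_mem' := by
    rintro a ⟨ha1, ha2⟩
    refine ⟨fun v w => ?_, ?_⟩
    · show B (a.symm v) (a.symm w) = B v w
      conv_rhs => rw [← a.apply_symm_apply v, ← a.apply_symm_apply w]
      rw [ha1]
    · show a.symm hh = hh
      conv_lhs => rw [← ha2]
      exact a.symm_apply_apply hh

/-- A triangle: a 3-element subset of L with pairwise inner products 1. -/
def IsTriangle (s : Finset V) : Prop :=
  ↑s ⊆ L ∧ s.card = 3 ∧ ∀ a ∈ s, ∀ b ∈ s, a ≠ b → B a b = 1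

/-- A 3-element subset of L̄ is liftable if it is the image of a triangle in L. -/
def Liftable (t : Set (Set V)) : Prop :=
  ∃ s : Finset V, IsTriangle s ∧ t = (fun v => ({v, iota v} : Set V)) '' ↑s


/-! ### Auxiliary machinery -/

set_option maxHeartbeats 4000000
set_option maxRecDepth 10000

namespace Stmt8Aux

/-- tuples of 8 integers -/
structure W8 where
  a : ℤ
  b : ℤ
  c : ℤ
  d : ℤ
  e : ℤ
  f : ℤ
  g : ℤ
  h : ℤ
deriving DecidableEq

structure Q4 where
  p : W8
  q : W8
  r : W8
  s : W8
deriving DecidableEq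

def toV (x : W8) : V := ![x.a, x.b, x.c, x.d, x.e, x.f, x.g, x.h]

def Bw (x y : W8) : ℤ :=
  x.a*y.a - (x.b*y.b + x.c*y.c + x.d*y.d + x.e*y.e + x.f*y.f + x.g*y.g + x.h*y.h)

def hw : W8 := ⟨3,-1,-1,-1,-1,-1,-1,-1⟩

def iotaW (x : W8) : W8 :=
  ⟨3*(Bw x hw) - x.a, -(Bw x hw) - x.b, -(Bw x hw) - x.c, -(Bw x hw) - x.d, -(Bw x hw) - x.e,
   -(Bw x hw) - x.f, -(Bw x hw) - x.g, -(Bw x hw) - x.h⟩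

def Lw : List W8 := [W8.mk 0 1 0 0 0 0 0 0,W8.mk 0 0 1 0 0 0 0 0,W8.mk 0 0 0 1 0 0 0 0,W8.mk 0 0 0 0 1 0 0 0,W8.mk 0 0 0 0 0 1 0 0,W8.mk 0 0 0 0 0 0 1 0,W8.mk 0 0 0 0 0 0 0 1,W8.mk 1 (-1) (-1) 0 0 0 0 0,W8.mk 1 (-1) 0 (-1) 0 0 0 0,W8.mk 1 (-1) 0 0 (-1) 0 0 0,W8.mk 1 (-1) 0 0 0 (-1) 0 0,W8.mk 1 (-1) 0 0 0 0 (-1) 0,W8.mk 1 (-1) 0 0 0 0 0 (-1),W8.mk 1 0 (-1) (-1) 0 0 0 0,W8.mk 1 0 (-1) 0 (-1) 0 0 0,W8.mk 1 0 (-1) 0 0 (-1) 0 0,W8.mk 1 0 (-1) 0 0 0 (-1) 0,W8.mk 1 0 (-1) 0 0 0 0 (-1),W8.mk 1 0 0 (-1) (-1) 0 0 0,W8.mk 1 0 0 (-1) 0 (-1) 0 0,W8.mk 1 0 0 (-1) 0 0 (-1) 0,W8.mk 1 0 0 (-1) 0 0 0 (-1),W8.mk 1 0 0 0 (-1) (-1)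 0 0,W8.mk 1 0 0 0 (-1) 0 (-1) 0,W8.mk 1 0 0 0 (-1) 0 0 (-1),W8.mk 1 0 0 0 0 (-1) (-1) 0,W8.mk 1 0 0 0 0 (-1) 0 (-1),W8.mk 1 0 0 0 0 0 (-1) (-1),W8.mk 2 (-1) (-1) (-1) (-1) (-1) 0 0,W8.mk 2 (-1) (-1) (-1) (-1) 0 (-1) 0,W8.mk 2 (-1) (-1) (-1) (-1) 0 0 (-1),W8.mk 2 (-1) (-1) (-1) 0 (-1) (-1) 0,W8.mk 2 (-1) (-1) (-1) 0 (-1) 0 (-1),W8.mk 2 (-1) (-1) (-1) 0 0 (-1) (-1),W8.mk 2 (-1) (-1) 0 (-1) (-1) (-1) 0,W8.mk 2 (-1) (-1) 0 (-1) (-1) 0 (-1),W8.mk 2 (-1) (-1) 0 (-1) 0 (-1) (-1),W8.mk 2 (-1) (-1) 0 0 (-1) (-1) (-1),W8.mk 2 (-1) 0 (-1) (-1) (-1) (-1) 0,W8.mk 2 (-1) 0 (-1) (-1) (-1) 0 (-1),W8.mk 2 (-1) 0 (-1) (-1) 0 (-1) (-1),W8.mk 2 (-1) 0 (-1) 0 (-1)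 (-1) (-1),W8.mk 2 (-1) 0 0 (-1) (-1) (-1) (-1),W8.mk 2 0 (-1) (-1) (-1) (-1) (-1) 0,W8.mk 2 0 (-1) (-1) (-1) (-1) 0 (-1),W8.mk 2 0 (-1) (-1) (-1) 0 (-1) (-1),W8.mk 2 0 (-1) (-1) 0 (-1) (-1) (-1),W8.mk 2 0 (-1) 0 (-1) (-1) (-1) (-1),W8.mk 2 0 0 (-1) (-1) (-1) (-1) (-1),W8.mk 3 (-2) (-1) (-1) (-1) (-1) (-1) (-1),W8.mk 3 (-1) (-2) (-1) (-1) (-1) (-1) (-1),W8.mk 3 (-1) (-1) (-2) (-1) (-1) (-1) (-1),W8.mk 3 (-1) (-1) (-1) (-2) (-1) (-1) (-1),W8.mk 3 (-1) (-1) (-1) (-1) (-2) (-1) (-1),W8.mk 3 (-1) (-1) (-1) (-1) (-1) (-2) (-1),W8.mk 3 (-1) (-1) (-1) (-1) (-1) (-1) (-2)]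

def rep28 : List W8 := [W8.mk 0 1 0 0 0 0 0 0,W8.mk 0 0 1 0 0 0 0 0,W8.mk 0 0 0 1 0 0 0 0,W8.mk 0 0 0 0 1 0 0 0,W8.mk 0 0 0 0 0 1 0 0,W8.mk 0 0 0 0 0 0 1 0,W8.mk 0 0 0 0 0 0 0 1,W8.mk 1 (-1) (-1) 0 0 0 0 0,W8.mk 1 (-1) 0 (-1) 0 0 0 0,W8.mk 1 (-1) 0 0 (-1) 0 0 0,W8.mk 1 (-1) 0 0 0 (-1) 0 0,W8.mk 1 (-1) 0 0 0 0 (-1) 0,W8.mk 1 (-1) 0 0 0 0 0 (-1),W8.mk 1 0 (-1) (-1) 0 0 0 0,W8.mk 1 0 (-1) 0 (-1) 0 0 0,W8.mk 1 0 (-1) 0 0 (-1) 0 0,W8.mk 1 0 (-1) 0 0 0 (-1) 0,W8.mk 1 0 (-1) 0 0 0 0 (-1),W8.mk 1 0 0 (-1) (-1) 0 0 0,W8.mk 1 0 0 (-1) 0 (-1) 0 0,W8.mk 1 0 0 (-1) 0 0 (-1) 0,W8.mk 1 0 0 (-1) 0 0 0 (-1),W8.mk 1 0 0 0 (-1) (-1)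 0 0,W8.mk 1 0 0 0 (-1) 0 (-1) 0,W8.mk 1 0 0 0 (-1) 0 0 (-1),W8.mk 1 0 0 0 0 (-1) (-1) 0,W8.mk 1 0 0 0 0 (-1) 0 (-1),W8.mk 1 0 0 0 0 0 (-1) (-1)]

def Tq : List Q4 := [Q4.mk (W8.mk 0 1 0 0 0 0 0 0) (W8.mk 1 (-1) (-1) 0 0 0 0 0) (W8.mk 2 (-1) 0 (-1) (-1) (-1) (-1) 0) (W8.mk 3 (-1) (-1) (-1) (-1) (-1) (-1) (-2)),Q4.mk (W8.mk 0 1 0 0 0 0 0 0) (W8.mk 1 (-1) (-1) 0 0 0 0 0) (W8.mk 2 (-1) 0 (-1) (-1) (-1) 0 (-1)) (W8.mk 3 (-1) (-1) (-1) (-1) (-1) (-2) (-1)),Q4.mk (W8.mk 0 1 0 0 0 0 0 0) (W8.mk 1 (-1) (-1) 0 0 0 0 0) (W8.mk 2 (-1) 0 (-1) (-1) 0 (-1) (-1)) (W8.mk 3 (-1) (-1) (-1) (-1) (-2) (-1) (-1)),Q4.mk (W8.mk 0 1 0 0 0 0 0 0) (W8.mk 1 (-1) (-1) 0 0 0 0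 0) (W8.mk 2 (-1) 0 (-1) 0 (-1) (-1) (-1)) (W8.mk 3 (-1) (-1) (-1) (-2) (-1) (-1) (-1)),Q4.mk (W8.mk 0 1 0 0 0 0 0 0) (W8.mk 1 (-1) (-1) 0 0 0 0 0) (W8.mk 2 (-1) 0 0 (-1) (-1) (-1) (-1)) (W8.mk 3 (-1) (-1) (-2) (-1) (-1) (-1) (-1)),Q4.mk (W8.mk 0 1 0 0 0 0 0 0) (W8.mk 1 (-1) 0 (-1) 0 0 0 0) (W8.mk 2 (-1) (-1) 0 (-1) (-1) (-1) 0) (W8.mk 3 (-1) (-1) (-1) (-1) (-1) (-1) (-2)),Q4.mk (W8.mk 0 1 0 0 0 0 0 0) (W8.mk 1 (-1) 0 (-1) 0 0 0 0) (W8.mk 2 (-1) (-1) 0 (-1) (-1) 0 (-1)) (W8.mk 3 (-1) (-1) (-1) (-1) (-1) (-2) (-1)),Q4.mk (W8.mk 0 1 0 0 0 0 0 0) (W8.mk 1 (-1) 0 (-1) 0 0 0 0) (W8.mk 2 (-1) (-1) 0 (-1) 0 (-1) (-1)) (W8.mk 3 (-1) (-1) (-1) (-1) (-2) (-1) (-1)),Q4.mk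 (W8.mk 0 1 0 0 0 0 0 0) (W8.mk 1 (-1) 0 (-1) 0 0 0 0) (W8.mk 2 (-1) (-1) 0 0 (-1) (-1) (-1)) (W8.mk 3 (-1) (-1) (-1) (-2) (-1) (-1) (-1)),Q4.mk (W8.mk 0 1 0 0 0 0 0 0) (W8.mk 1 (-1) 0 (-1) 0 0 0 0) (W8.mk 2 (-1) 0 0 (-1) (-1) (-1) (-1)) (W8.mk 3 (-1) (-2) (-1) (-1) (-1) (-1) (-1)),Q4.mk (W8.mk 0 1 0 0 0 0 0 0) (W8.mk 1 (-1) 0 0 (-1) 0 0 0) (W8.mk 2 (-1) (-1) (-1) 0 (-1) (-1) 0) (W8.mk 3 (-1) (-1) (-1) (-1) (-1) (-1) (-2)),Q4.mk (W8.mk 0 1 0 0 0 0 0 0) (W8.mk 1 (-1) 0 0 (-1) 0 0 0) (W8.mk 2 (-1) (-1) (-1) 0 (-1) 0 (-1)) (W8.mk 3 (-1) (-1) (-1) (-1) (-1) (-2) (-1)),Q4.mk (W8.mk 0 1 0 0 0 0 0 0) (W8.mk 1 (-1) 0 0 (-1) 0 0 0) (W8.mk 2 (-1) (-1) (-1) 0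 0 (-1) (-1)) (W8.mk 3 (-1) (-1) (-1) (-1) (-2) (-1) (-1)),Q4.mk (W8.mk 0 1 0 0 0 0 0 0) (W8.mk 1 (-1) 0 0 (-1) 0 0 0) (W8.mk 2 (-1) (-1) 0 0 (-1) (-1) (-1)) (W8.mk 3 (-1) (-1) (-2) (-1) (-1) (-1) (-1)),Q4.mk (W8.mk 0 1 0 0 0 0 0 0) (W8.mk 1 (-1) 0 0 (-1) 0 0 0) (W8.mk 2 (-1) 0 (-1) 0 (-1) (-1) (-1)) (W8.mk 3 (-1) (-2) (-1) (-1) (-1) (-1) (-1)),Q4.mk (W8.mk 0 1 0 0 0 0 0 0) (W8.mk 1 (-1) 0 0 0 (-1) 0 0) (W8.mk 2 (-1) (-1) (-1) (-1) 0 (-1) 0) (W8.mk 3 (-1) (-1) (-1) (-1) (-1) (-1) (-2)),Q4.mk (W8.mk 0 1 0 0 0 0 0 0) (W8.mk 1 (-1) 0 0 0 (-1) 0 0) (W8.mk 2 (-1) (-1) (-1) (-1) 0 0 (-1)) (W8.mk 3 (-1) (-1) (-1) (-1) (-1) (-2) (-1)),Q4.mk (W8.mk 0 1 0 0 0 0 0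 0) (W8.mk 1 (-1) 0 0 0 (-1) 0 0) (W8.mk 2 (-1) (-1) (-1) 0 0 (-1) (-1)) (W8.mk 3 (-1) (-1) (-1) (-2) (-1) (-1) (-1)),Q4.mk (W8.mk 0 1 0 0 0 0 0 0) (W8.mk 1 (-1) 0 0 0 (-1) 0 0) (W8.mk 2 (-1) (-1) 0 (-1) 0 (-1) (-1)) (W8.mk 3 (-1) (-1) (-2) (-1) (-1) (-1) (-1)),Q4.mk (W8.mk 0 1 0 0 0 0 0 0) (W8.mk 1 (-1) 0 0 0 (-1) 0 0) (W8.mk 2 (-1) 0 (-1) (-1) 0 (-1) (-1)) (W8.mk 3 (-1) (-2) (-1) (-1) (-1) (-1) (-1)),Q4.mk (W8.mk 0 1 0 0 0 0 0 0) (W8.mk 1 (-1) 0 0 0 0 (-1) 0) (W8.mk 2 (-1) (-1) (-1) (-1) (-1) 0 0) (W8.mk 3 (-1) (-1) (-1) (-1) (-1) (-1) (-2)),Q4.mk (W8.mk 0 1 0 0 0 0 0 0) (W8.mk 1 (-1) 0 0 0 0 (-1) 0) (W8.mk 2 (-1) (-1) (-1) (-1) 0 0 (-1)) (W8.mk 3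 (-1) (-1) (-1) (-1) (-2) (-1) (-1)),Q4.mk (W8.mk 0 1 0 0 0 0 0 0) (W8.mk 1 (-1) 0 0 0 0 (-1) 0) (W8.mk 2 (-1) (-1) (-1) 0 (-1) 0 (-1)) (W8.mk 3 (-1) (-1) (-1) (-2) (-1) (-1) (-1)),Q4.mk (W8.mk 0 1 0 0 0 0 0 0) (W8.mk 1 (-1) 0 0 0 0 (-1) 0) (W8.mk 2 (-1) (-1) 0 (-1) (-1) 0 (-1)) (W8.mk 3 (-1) (-1) (-2) (-1) (-1) (-1) (-1)),Q4.mk (W8.mk 0 1 0 0 0 0 0 0) (W8.mk 1 (-1) 0 0 0 0 (-1) 0) (W8.mk 2 (-1) 0 (-1) (-1) (-1) 0 (-1)) (W8.mk 3 (-1) (-2) (-1) (-1) (-1) (-1) (-1)),Q4.mk (W8.mk 0 1 0 0 0 0 0 0) (W8.mk 1 (-1) 0 0 0 0 0 (-1)) (W8.mk 2 (-1) (-1) (-1) (-1) (-1) 0 0) (W8.mk 3 (-1) (-1) (-1) (-1) (-1) (-2) (-1)),Q4.mk (W8.mk 0 1 0 0 0 0 0 0) (W8.mk 1 (-1) 0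 0 0 0 0 (-1)) (W8.mk 2 (-1) (-1) (-1) (-1) 0 (-1) 0) (W8.mk 3 (-1) (-1) (-1) (-1) (-2) (-1) (-1)),Q4.mk (W8.mk 0 1 0 0 0 0 0 0) (W8.mk 1 (-1) 0 0 0 0 0 (-1)) (W8.mk 2 (-1) (-1) (-1) 0 (-1) (-1) 0) (W8.mk 3 (-1) (-1) (-1) (-2) (-1) (-1) (-1)),Q4.mk (W8.mk 0 1 0 0 0 0 0 0) (W8.mk 1 (-1) 0 0 0 0 0 (-1)) (W8.mk 2 (-1) (-1) 0 (-1) (-1) (-1) 0) (W8.mk 3 (-1) (-1) (-2) (-1) (-1) (-1) (-1)),Q4.mk (W8.mk 0 1 0 0 0 0 0 0) (W8.mk 1 (-1) 0 0 0 0 0 (-1)) (W8.mk 2 (-1) 0 (-1) (-1) (-1) (-1) 0) (W8.mk 3 (-1) (-2) (-1) (-1) (-1) (-1) (-1)),Q4.mk (W8.mk 0 1 0 0 0 0 0 0) (W8.mk 2 (-1) (-1) (-1) (-1) (-1) 0 0) (W8.mk 2 (-1) (-1) (-1) 0 0 (-1) (-1)) (W8.mk 2 (-1) 0 0 (-1)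 (-1) (-1) (-1)),Q4.mk (W8.mk 0 1 0 0 0 0 0 0) (W8.mk 2 (-1) (-1) (-1) (-1) (-1) 0 0) (W8.mk 2 (-1) (-1) 0 (-1) 0 (-1) (-1)) (W8.mk 2 (-1) 0 (-1) 0 (-1) (-1) (-1)),Q4.mk (W8.mk 0 1 0 0 0 0 0 0) (W8.mk 2 (-1) (-1) (-1) (-1) (-1) 0 0) (W8.mk 2 (-1) (-1) 0 0 (-1) (-1) (-1)) (W8.mk 2 (-1) 0 (-1) (-1) 0 (-1) (-1)),Q4.mk (W8.mk 0 1 0 0 0 0 0 0) (W8.mk 2 (-1) (-1) (-1) (-1) 0 (-1) 0) (W8.mk 2 (-1) (-1) (-1) 0 (-1) 0 (-1)) (W8.mk 2 (-1) 0 0 (-1) (-1) (-1) (-1)),Q4.mk (W8.mk 0 1 0 0 0 0 0 0) (W8.mk 2 (-1) (-1) (-1) (-1) 0 (-1) 0) (W8.mk 2 (-1) (-1) 0 (-1) (-1) 0 (-1)) (W8.mk 2 (-1) 0 (-1) 0 (-1) (-1) (-1)),Q4.mk (W8.mk 0 1 0 0 0 0 0 0) (W8.mk 2 (-1) (-1)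 (-1) (-1) 0 (-1) 0) (W8.mk 2 (-1) (-1) 0 0 (-1) (-1) (-1)) (W8.mk 2 (-1) 0 (-1) (-1) (-1) 0 (-1)),Q4.mk (W8.mk 0 1 0 0 0 0 0 0) (W8.mk 2 (-1) (-1) (-1) (-1) 0 0 (-1)) (W8.mk 2 (-1) (-1) (-1) 0 (-1) (-1) 0) (W8.mk 2 (-1) 0 0 (-1) (-1) (-1) (-1)),Q4.mk (W8.mk 0 1 0 0 0 0 0 0) (W8.mk 2 (-1) (-1) (-1) (-1) 0 0 (-1)) (W8.mk 2 (-1) (-1) 0 (-1) (-1) (-1) 0) (W8.mk 2 (-1) 0 (-1) 0 (-1) (-1) (-1)),Q4.mk (W8.mk 0 1 0 0 0 0 0 0) (W8.mk 2 (-1) (-1) (-1) (-1) 0 0 (-1)) (W8.mk 2 (-1) (-1) 0 0 (-1) (-1) (-1)) (W8.mk 2 (-1) 0 (-1) (-1) (-1) (-1) 0),Q4.mk (W8.mk 0 1 0 0 0 0 0 0) (W8.mk 2 (-1) (-1) (-1) 0 (-1) (-1) 0) (W8.mk 2 (-1) (-1) 0 (-1) (-1) 0 (-1)) (W8.mk 2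 (-1) 0 (-1) (-1) 0 (-1) (-1)),Q4.mk (W8.mk 0 1 0 0 0 0 0 0) (W8.mk 2 (-1) (-1) (-1) 0 (-1) (-1) 0) (W8.mk 2 (-1) (-1) 0 (-1) 0 (-1) (-1)) (W8.mk 2 (-1) 0 (-1) (-1) (-1) 0 (-1)),Q4.mk (W8.mk 0 1 0 0 0 0 0 0) (W8.mk 2 (-1) (-1) (-1) 0 (-1) 0 (-1)) (W8.mk 2 (-1) (-1) 0 (-1) (-1) (-1) 0) (W8.mk 2 (-1) 0 (-1) (-1) 0 (-1) (-1)),Q4.mk (W8.mk 0 1 0 0 0 0 0 0) (W8.mk 2 (-1) (-1) (-1) 0 (-1) 0 (-1)) (W8.mk 2 (-1) (-1) 0 (-1) 0 (-1) (-1)) (W8.mk 2 (-1) 0 (-1) (-1) (-1) (-1) 0),Q4.mk (W8.mk 0 1 0 0 0 0 0 0) (W8.mk 2 (-1) (-1) (-1) 0 0 (-1) (-1)) (W8.mk 2 (-1) (-1) 0 (-1) (-1) (-1) 0) (W8.mk 2 (-1) 0 (-1) (-1) (-1) 0 (-1)),Q4.mk (W8.mk 0 1 0 0 0 0 0 0)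 (W8.mk 2 (-1) (-1) (-1) 0 0 (-1) (-1)) (W8.mk 2 (-1) (-1) 0 (-1) (-1) 0 (-1)) (W8.mk 2 (-1) 0 (-1) (-1) (-1) (-1) 0),Q4.mk (W8.mk 0 0 1 0 0 0 0 0) (W8.mk 1 (-1) (-1) 0 0 0 0 0) (W8.mk 2 0 (-1) (-1) (-1) (-1) (-1) 0) (W8.mk 3 (-1) (-1) (-1) (-1) (-1) (-1) (-2)),Q4.mk (W8.mk 0 0 1 0 0 0 0 0) (W8.mk 1 (-1) (-1) 0 0 0 0 0) (W8.mk 2 0 (-1) (-1) (-1) (-1) 0 (-1)) (W8.mk 3 (-1) (-1) (-1) (-1) (-1) (-2) (-1)),Q4.mk (W8.mk 0 0 1 0 0 0 0 0) (W8.mk 1 (-1) (-1) 0 0 0 0 0) (W8.mk 2 0 (-1) (-1) (-1) 0 (-1) (-1)) (W8.mk 3 (-1) (-1) (-1) (-1) (-2) (-1) (-1)),Q4.mk (W8.mk 0 0 1 0 0 0 0 0) (W8.mk 1 (-1) (-1) 0 0 0 0 0) (W8.mk 2 0 (-1) (-1) 0 (-1) (-1) (-1)) (W8.mk 3 (-1)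 (-1) (-1) (-2) (-1) (-1) (-1)),Q4.mk (W8.mk 0 0 1 0 0 0 0 0) (W8.mk 1 (-1) (-1) 0 0 0 0 0) (W8.mk 2 0 (-1) 0 (-1) (-1) (-1) (-1)) (W8.mk 3 (-1) (-1) (-2) (-1) (-1) (-1) (-1)),Q4.mk (W8.mk 0 0 1 0 0 0 0 0) (W8.mk 1 0 (-1) (-1) 0 0 0 0) (W8.mk 2 (-1) (-1) 0 (-1) (-1) (-1) 0) (W8.mk 3 (-1) (-1) (-1) (-1) (-1) (-1) (-2)),Q4.mk (W8.mk 0 0 1 0 0 0 0 0) (W8.mk 1 0 (-1) (-1) 0 0 0 0) (W8.mk 2 (-1) (-1) 0 (-1) (-1) 0 (-1)) (W8.mk 3 (-1) (-1) (-1) (-1) (-1) (-2) (-1)),Q4.mk (W8.mk 0 0 1 0 0 0 0 0) (W8.mk 1 0 (-1) (-1) 0 0 0 0) (W8.mk 2 (-1) (-1) 0 (-1) 0 (-1) (-1)) (W8.mk 3 (-1) (-1) (-1) (-1) (-2) (-1) (-1)),Q4.mk (W8.mk 0 0 1 0 0 0 0 0) (W8.mk 1 0 (-1) (-1) 0 0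 0 0) (W8.mk 2 (-1) (-1) 0 0 (-1) (-1) (-1)) (W8.mk 3 (-1) (-1) (-1) (-2) (-1) (-1) (-1)),Q4.mk (W8.mk 0 0 1 0 0 0 0 0) (W8.mk 1 0 (-1) 0 (-1) 0 0 0) (W8.mk 2 (-1) (-1) (-1) 0 (-1) (-1) 0) (W8.mk 3 (-1) (-1) (-1) (-1) (-1) (-1) (-2)),Q4.mk (W8.mk 0 0 1 0 0 0 0 0) (W8.mk 1 0 (-1) 0 (-1) 0 0 0) (W8.mk 2 (-1) (-1) (-1) 0 (-1) 0 (-1)) (W8.mk 3 (-1) (-1) (-1) (-1) (-1) (-2) (-1)),Q4.mk (W8.mk 0 0 1 0 0 0 0 0) (W8.mk 1 0 (-1) 0 (-1) 0 0 0) (W8.mk 2 (-1) (-1) (-1) 0 0 (-1) (-1)) (W8.mk 3 (-1) (-1) (-1) (-1) (-2) (-1) (-1)),Q4.mk (W8.mk 0 0 1 0 0 0 0 0) (W8.mk 1 0 (-1) 0 (-1) 0 0 0) (W8.mk 2 (-1) (-1) 0 0 (-1) (-1) (-1)) (W8.mk 3 (-1) (-1) (-2) (-1) (-1) (-1) (-1)),Q4.mk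 (W8.mk 0 0 1 0 0 0 0 0) (W8.mk 1 0 (-1) 0 0 (-1) 0 0) (W8.mk 2 (-1) (-1) (-1) (-1) 0 (-1) 0) (W8.mk 3 (-1) (-1) (-1) (-1) (-1) (-1) (-2)),Q4.mk (W8.mk 0 0 1 0 0 0 0 0) (W8.mk 1 0 (-1) 0 0 (-1) 0 0) (W8.mk 2 (-1) (-1) (-1) (-1) 0 0 (-1)) (W8.mk 3 (-1) (-1) (-1) (-1) (-1) (-2) (-1)),Q4.mk (W8.mk 0 0 1 0 0 0 0 0) (W8.mk 1 0 (-1) 0 0 (-1) 0 0) (W8.mk 2 (-1) (-1) (-1) 0 0 (-1) (-1)) (W8.mk 3 (-1) (-1) (-1) (-2) (-1) (-1) (-1)),Q4.mk (W8.mk 0 0 1 0 0 0 0 0) (W8.mk 1 0 (-1) 0 0 (-1) 0 0) (W8.mk 2 (-1) (-1) 0 (-1) 0 (-1) (-1)) (W8.mk 3 (-1) (-1) (-2) (-1) (-1) (-1) (-1)),Q4.mk (W8.mk 0 0 1 0 0 0 0 0) (W8.mk 1 0 (-1) 0 0 0 (-1) 0) (W8.mk 2 (-1) (-1) (-1) (-1)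 (-1) 0 0) (W8.mk 3 (-1) (-1) (-1) (-1) (-1) (-1) (-2)),Q4.mk (W8.mk 0 0 1 0 0 0 0 0) (W8.mk 1 0 (-1) 0 0 0 (-1) 0) (W8.mk 2 (-1) (-1) (-1) (-1) 0 0 (-1)) (W8.mk 3 (-1) (-1) (-1) (-1) (-2) (-1) (-1)),Q4.mk (W8.mk 0 0 1 0 0 0 0 0) (W8.mk 1 0 (-1) 0 0 0 (-1) 0) (W8.mk 2 (-1) (-1) (-1) 0 (-1) 0 (-1)) (W8.mk 3 (-1) (-1) (-1) (-2) (-1) (-1) (-1)),Q4.mk (W8.mk 0 0 1 0 0 0 0 0) (W8.mk 1 0 (-1) 0 0 0 (-1) 0) (W8.mk 2 (-1) (-1) 0 (-1) (-1) 0 (-1)) (W8.mk 3 (-1) (-1) (-2) (-1) (-1) (-1) (-1)),Q4.mk (W8.mk 0 0 1 0 0 0 0 0) (W8.mk 1 0 (-1) 0 0 0 0 (-1)) (W8.mk 2 (-1) (-1) (-1) (-1) (-1) 0 0) (W8.mk 3 (-1) (-1) (-1) (-1) (-1) (-2) (-1)),Q4.mk (W8.mk 0 0 1 0 0 0 0 0)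 (W8.mk 1 0 (-1) 0 0 0 0 (-1)) (W8.mk 2 (-1) (-1) (-1) (-1) 0 (-1) 0) (W8.mk 3 (-1) (-1) (-1) (-1) (-2) (-1) (-1)),Q4.mk (W8.mk 0 0 1 0 0 0 0 0) (W8.mk 1 0 (-1) 0 0 0 0 (-1)) (W8.mk 2 (-1) (-1) (-1) 0 (-1) (-1) 0) (W8.mk 3 (-1) (-1) (-1) (-2) (-1) (-1) (-1)),Q4.mk (W8.mk 0 0 1 0 0 0 0 0) (W8.mk 1 0 (-1) 0 0 0 0 (-1)) (W8.mk 2 (-1) (-1) 0 (-1) (-1) (-1) 0) (W8.mk 3 (-1) (-1) (-2) (-1) (-1) (-1) (-1)),Q4.mk (W8.mk 0 0 1 0 0 0 0 0) (W8.mk 2 (-1) (-1) (-1) (-1) (-1) 0 0) (W8.mk 2 (-1) (-1) (-1) 0 0 (-1) (-1)) (W8.mk 2 0 (-1) 0 (-1) (-1) (-1) (-1)),Q4.mk (W8.mk 0 0 1 0 0 0 0 0) (W8.mk 2 (-1) (-1) (-1) (-1) (-1) 0 0) (W8.mk 2 (-1) (-1) 0 (-1) 0 (-1) (-1)) (W8.mk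 2 0 (-1) (-1) 0 (-1) (-1) (-1)),Q4.mk (W8.mk 0 0 1 0 0 0 0 0) (W8.mk 2 (-1) (-1) (-1) (-1) (-1) 0 0) (W8.mk 2 (-1) (-1) 0 0 (-1) (-1) (-1)) (W8.mk 2 0 (-1) (-1) (-1) 0 (-1) (-1)),Q4.mk (W8.mk 0 0 1 0 0 0 0 0) (W8.mk 2 (-1) (-1) (-1) (-1) 0 (-1) 0) (W8.mk 2 (-1) (-1) (-1) 0 (-1) 0 (-1)) (W8.mk 2 0 (-1) 0 (-1) (-1) (-1) (-1)),Q4.mk (W8.mk 0 0 1 0 0 0 0 0) (W8.mk 2 (-1) (-1) (-1) (-1) 0 (-1) 0) (W8.mk 2 (-1) (-1) 0 (-1) (-1) 0 (-1)) (W8.mk 2 0 (-1) (-1) 0 (-1) (-1) (-1)),Q4.mk (W8.mk 0 0 1 0 0 0 0 0) (W8.mk 2 (-1) (-1) (-1) (-1) 0 (-1) 0) (W8.mk 2 (-1) (-1) 0 0 (-1) (-1) (-1)) (W8.mk 2 0 (-1) (-1) (-1) (-1) 0 (-1)),Q4.mk (W8.mk 0 0 1 0 0 0 0 0) (W8.mk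 2 (-1) (-1) (-1) (-1) 0 0 (-1)) (W8.mk 2 (-1) (-1) (-1) 0 (-1) (-1) 0) (W8.mk 2 0 (-1) 0 (-1) (-1) (-1) (-1)),Q4.mk (W8.mk 0 0 1 0 0 0 0 0) (W8.mk 2 (-1) (-1) (-1) (-1) 0 0 (-1)) (W8.mk 2 (-1) (-1) 0 (-1) (-1) (-1) 0) (W8.mk 2 0 (-1) (-1) 0 (-1) (-1) (-1)),Q4.mk (W8.mk 0 0 1 0 0 0 0 0) (W8.mk 2 (-1) (-1) (-1) (-1) 0 0 (-1)) (W8.mk 2 (-1) (-1) 0 0 (-1) (-1) (-1)) (W8.mk 2 0 (-1) (-1) (-1) (-1) (-1) 0),Q4.mk (W8.mk 0 0 1 0 0 0 0 0) (W8.mk 2 (-1) (-1) (-1) 0 (-1) (-1) 0) (W8.mk 2 (-1) (-1) 0 (-1) (-1) 0 (-1)) (W8.mk 2 0 (-1) (-1) (-1) 0 (-1) (-1)),Q4.mk (W8.mk 0 0 1 0 0 0 0 0) (W8.mk 2 (-1) (-1) (-1) 0 (-1) (-1) 0) (W8.mk 2 (-1) (-1) 0 (-1) 0 (-1) (-1))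 (W8.mk 2 0 (-1) (-1) (-1) (-1) 0 (-1)),Q4.mk (W8.mk 0 0 1 0 0 0 0 0) (W8.mk 2 (-1) (-1) (-1) 0 (-1) 0 (-1)) (W8.mk 2 (-1) (-1) 0 (-1) (-1) (-1) 0) (W8.mk 2 0 (-1) (-1) (-1) 0 (-1) (-1)),Q4.mk (W8.mk 0 0 1 0 0 0 0 0) (W8.mk 2 (-1) (-1) (-1) 0 (-1) 0 (-1)) (W8.mk 2 (-1) (-1) 0 (-1) 0 (-1) (-1)) (W8.mk 2 0 (-1) (-1) (-1) (-1) (-1) 0),Q4.mk (W8.mk 0 0 1 0 0 0 0 0) (W8.mk 2 (-1) (-1) (-1) 0 0 (-1) (-1)) (W8.mk 2 (-1) (-1) 0 (-1) (-1) (-1) 0) (W8.mk 2 0 (-1) (-1) (-1) (-1) 0 (-1)),Q4.mk (W8.mk 0 0 1 0 0 0 0 0) (W8.mk 2 (-1) (-1) (-1) 0 0 (-1) (-1)) (W8.mk 2 (-1) (-1) 0 (-1) (-1) 0 (-1)) (W8.mk 2 0 (-1) (-1) (-1) (-1) (-1) 0),Q4.mk (W8.mk 0 0 0 1 0 0 0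 0) (W8.mk 1 (-1) 0 (-1) 0 0 0 0) (W8.mk 2 0 (-1) (-1) (-1) (-1) (-1) 0) (W8.mk 3 (-1) (-1) (-1) (-1) (-1) (-1) (-2)),Q4.mk (W8.mk 0 0 0 1 0 0 0 0) (W8.mk 1 (-1) 0 (-1) 0 0 0 0) (W8.mk 2 0 (-1) (-1) (-1) (-1) 0 (-1)) (W8.mk 3 (-1) (-1) (-1) (-1) (-1) (-2) (-1)),Q4.mk (W8.mk 0 0 0 1 0 0 0 0) (W8.mk 1 (-1) 0 (-1) 0 0 0 0) (W8.mk 2 0 (-1) (-1) (-1) 0 (-1) (-1)) (W8.mk 3 (-1) (-1) (-1) (-1) (-2) (-1) (-1)),Q4.mk (W8.mk 0 0 0 1 0 0 0 0) (W8.mk 1 (-1) 0 (-1) 0 0 0 0) (W8.mk 2 0 (-1) (-1) 0 (-1) (-1) (-1)) (W8.mk 3 (-1) (-1) (-1) (-2) (-1) (-1) (-1)),Q4.mk (W8.mk 0 0 0 1 0 0 0 0) (W8.mk 1 0 (-1) (-1) 0 0 0 0) (W8.mk 2 (-1) 0 (-1) (-1) (-1) (-1) 0) (W8.mk 3 (-1)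 (-1) (-1) (-1) (-1) (-1) (-2)),Q4.mk (W8.mk 0 0 0 1 0 0 0 0) (W8.mk 1 0 (-1) (-1) 0 0 0 0) (W8.mk 2 (-1) 0 (-1) (-1) (-1) 0 (-1)) (W8.mk 3 (-1) (-1) (-1) (-1) (-1) (-2) (-1)),Q4.mk (W8.mk 0 0 0 1 0 0 0 0) (W8.mk 1 0 (-1) (-1) 0 0 0 0) (W8.mk 2 (-1) 0 (-1) (-1) 0 (-1) (-1)) (W8.mk 3 (-1) (-1) (-1) (-1) (-2) (-1) (-1)),Q4.mk (W8.mk 0 0 0 1 0 0 0 0) (W8.mk 1 0 (-1) (-1) 0 0 0 0) (W8.mk 2 (-1) 0 (-1) 0 (-1) (-1) (-1)) (W8.mk 3 (-1) (-1) (-1) (-2) (-1) (-1) (-1)),Q4.mk (W8.mk 0 0 0 1 0 0 0 0) (W8.mk 1 0 0 (-1) (-1) 0 0 0) (W8.mk 2 (-1) (-1) (-1) 0 (-1) (-1) 0) (W8.mk 3 (-1) (-1) (-1) (-1) (-1) (-1) (-2)),Q4.mk (W8.mk 0 0 0 1 0 0 0 0) (W8.mk 1 0 0 (-1) (-1) 0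 0 0) (W8.mk 2 (-1) (-1) (-1) 0 (-1) 0 (-1)) (W8.mk 3 (-1) (-1) (-1) (-1) (-1) (-2) (-1)),Q4.mk (W8.mk 0 0 0 1 0 0 0 0) (W8.mk 1 0 0 (-1) (-1) 0 0 0) (W8.mk 2 (-1) (-1) (-1) 0 0 (-1) (-1)) (W8.mk 3 (-1) (-1) (-1) (-1) (-2) (-1) (-1)),Q4.mk (W8.mk 0 0 0 1 0 0 0 0) (W8.mk 1 0 0 (-1) 0 (-1) 0 0) (W8.mk 2 (-1) (-1) (-1) (-1) 0 (-1) 0) (W8.mk 3 (-1) (-1) (-1) (-1) (-1) (-1) (-2)),Q4.mk (W8.mk 0 0 0 1 0 0 0 0) (W8.mk 1 0 0 (-1) 0 (-1) 0 0) (W8.mk 2 (-1) (-1) (-1) (-1) 0 0 (-1)) (W8.mk 3 (-1) (-1) (-1) (-1) (-1) (-2) (-1)),Q4.mk (W8.mk 0 0 0 1 0 0 0 0) (W8.mk 1 0 0 (-1) 0 (-1) 0 0) (W8.mk 2 (-1) (-1) (-1) 0 0 (-1) (-1)) (W8.mk 3 (-1) (-1) (-1) (-2) (-1) (-1) (-1)),Q4.mk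 (W8.mk 0 0 0 1 0 0 0 0) (W8.mk 1 0 0 (-1) 0 0 (-1) 0) (W8.mk 2 (-1) (-1) (-1) (-1) (-1) 0 0) (W8.mk 3 (-1) (-1) (-1) (-1) (-1) (-1) (-2)),Q4.mk (W8.mk 0 0 0 1 0 0 0 0) (W8.mk 1 0 0 (-1) 0 0 (-1) 0) (W8.mk 2 (-1) (-1) (-1) (-1) 0 0 (-1)) (W8.mk 3 (-1) (-1) (-1) (-1) (-2) (-1) (-1)),Q4.mk (W8.mk 0 0 0 1 0 0 0 0) (W8.mk 1 0 0 (-1) 0 0 (-1) 0) (W8.mk 2 (-1) (-1) (-1) 0 (-1) 0 (-1)) (W8.mk 3 (-1) (-1) (-1) (-2) (-1) (-1) (-1)),Q4.mk (W8.mk 0 0 0 1 0 0 0 0) (W8.mk 1 0 0 (-1) 0 0 0 (-1)) (W8.mk 2 (-1) (-1) (-1) (-1) (-1) 0 0) (W8.mk 3 (-1) (-1) (-1) (-1) (-1) (-2) (-1)),Q4.mk (W8.mk 0 0 0 1 0 0 0 0) (W8.mk 1 0 0 (-1) 0 0 0 (-1)) (W8.mk 2 (-1) (-1) (-1) (-1)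 0 (-1) 0) (W8.mk 3 (-1) (-1) (-1) (-1) (-2) (-1) (-1)),Q4.mk (W8.mk 0 0 0 1 0 0 0 0) (W8.mk 1 0 0 (-1) 0 0 0 (-1)) (W8.mk 2 (-1) (-1) (-1) 0 (-1) (-1) 0) (W8.mk 3 (-1) (-1) (-1) (-2) (-1) (-1) (-1)),Q4.mk (W8.mk 0 0 0 1 0 0 0 0) (W8.mk 2 (-1) (-1) (-1) (-1) (-1) 0 0) (W8.mk 2 (-1) (-1) (-1) 0 0 (-1) (-1)) (W8.mk 2 0 0 (-1) (-1) (-1) (-1) (-1)),Q4.mk (W8.mk 0 0 0 1 0 0 0 0) (W8.mk 2 (-1) (-1) (-1) (-1) (-1) 0 0) (W8.mk 2 (-1) 0 (-1) (-1) 0 (-1) (-1)) (W8.mk 2 0 (-1) (-1) 0 (-1) (-1) (-1)),Q4.mk (W8.mk 0 0 0 1 0 0 0 0) (W8.mk 2 (-1) (-1) (-1) (-1) (-1) 0 0) (W8.mk 2 (-1) 0 (-1) 0 (-1) (-1) (-1)) (W8.mk 2 0 (-1) (-1) (-1) 0 (-1) (-1)),Q4.mk (W8.mk 0 0 0 1 0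 0 0 0) (W8.mk 2 (-1) (-1) (-1) (-1) 0 (-1) 0) (W8.mk 2 (-1) (-1) (-1) 0 (-1) 0 (-1)) (W8.mk 2 0 0 (-1) (-1) (-1) (-1) (-1)),Q4.mk (W8.mk 0 0 0 1 0 0 0 0) (W8.mk 2 (-1) (-1) (-1) (-1) 0 (-1) 0) (W8.mk 2 (-1) 0 (-1) (-1) (-1) 0 (-1)) (W8.mk 2 0 (-1) (-1) 0 (-1) (-1) (-1)),Q4.mk (W8.mk 0 0 0 1 0 0 0 0) (W8.mk 2 (-1) (-1) (-1) (-1) 0 (-1) 0) (W8.mk 2 (-1) 0 (-1) 0 (-1) (-1) (-1)) (W8.mk 2 0 (-1) (-1) (-1) (-1) 0 (-1)),Q4.mk (W8.mk 0 0 0 1 0 0 0 0) (W8.mk 2 (-1) (-1) (-1) (-1) 0 0 (-1)) (W8.mk 2 (-1) (-1) (-1) 0 (-1) (-1) 0) (W8.mk 2 0 0 (-1) (-1) (-1) (-1) (-1)),Q4.mk (W8.mk 0 0 0 1 0 0 0 0) (W8.mk 2 (-1) (-1) (-1) (-1) 0 0 (-1)) (W8.mk 2 (-1) 0 (-1) (-1)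 (-1) (-1) 0) (W8.mk 2 0 (-1) (-1) 0 (-1) (-1) (-1)),Q4.mk (W8.mk 0 0 0 1 0 0 0 0) (W8.mk 2 (-1) (-1) (-1) (-1) 0 0 (-1)) (W8.mk 2 (-1) 0 (-1) 0 (-1) (-1) (-1)) (W8.mk 2 0 (-1) (-1) (-1) (-1) (-1) 0),Q4.mk (W8.mk 0 0 0 1 0 0 0 0) (W8.mk 2 (-1) (-1) (-1) 0 (-1) (-1) 0) (W8.mk 2 (-1) 0 (-1) (-1) (-1) 0 (-1)) (W8.mk 2 0 (-1) (-1) (-1) 0 (-1) (-1)),Q4.mk (W8.mk 0 0 0 1 0 0 0 0) (W8.mk 2 (-1) (-1) (-1) 0 (-1) (-1) 0) (W8.mk 2 (-1) 0 (-1) (-1) 0 (-1) (-1)) (W8.mk 2 0 (-1) (-1) (-1) (-1) 0 (-1)),Q4.mk (W8.mk 0 0 0 1 0 0 0 0) (W8.mk 2 (-1) (-1) (-1) 0 (-1) 0 (-1)) (W8.mk 2 (-1) 0 (-1) (-1) (-1) (-1) 0) (W8.mk 2 0 (-1) (-1) (-1) 0 (-1) (-1)),Q4.mk (W8.mk 0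 0 0 1 0 0 0 0) (W8.mk 2 (-1) (-1) (-1) 0 (-1) 0 (-1)) (W8.mk 2 (-1) 0 (-1) (-1) 0 (-1) (-1)) (W8.mk 2 0 (-1) (-1) (-1) (-1) (-1) 0),Q4.mk (W8.mk 0 0 0 1 0 0 0 0) (W8.mk 2 (-1) (-1) (-1) 0 0 (-1) (-1)) (W8.mk 2 (-1) 0 (-1) (-1) (-1) (-1) 0) (W8.mk 2 0 (-1) (-1) (-1) (-1) 0 (-1)),Q4.mk (W8.mk 0 0 0 1 0 0 0 0) (W8.mk 2 (-1) (-1) (-1) 0 0 (-1) (-1)) (W8.mk 2 (-1) 0 (-1) (-1) (-1) 0 (-1)) (W8.mk 2 0 (-1) (-1) (-1) (-1) (-1) 0),Q4.mk (W8.mk 0 0 0 0 1 0 0 0) (W8.mk 1 (-1) 0 0 (-1) 0 0 0) (W8.mk 2 0 (-1) (-1) (-1) (-1) (-1) 0) (W8.mk 3 (-1) (-1) (-1) (-1) (-1) (-1) (-2)),Q4.mk (W8.mk 0 0 0 0 1 0 0 0) (W8.mk 1 (-1) 0 0 (-1) 0 0 0) (W8.mk 2 0 (-1) (-1) (-1)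 (-1) 0 (-1)) (W8.mk 3 (-1) (-1) (-1) (-1) (-1) (-2) (-1)),Q4.mk (W8.mk 0 0 0 0 1 0 0 0) (W8.mk 1 (-1) 0 0 (-1) 0 0 0) (W8.mk 2 0 (-1) (-1) (-1) 0 (-1) (-1)) (W8.mk 3 (-1) (-1) (-1) (-1) (-2) (-1) (-1)),Q4.mk (W8.mk 0 0 0 0 1 0 0 0) (W8.mk 1 0 (-1) 0 (-1) 0 0 0) (W8.mk 2 (-1) 0 (-1) (-1) (-1) (-1) 0) (W8.mk 3 (-1) (-1) (-1) (-1) (-1) (-1) (-2)),Q4.mk (W8.mk 0 0 0 0 1 0 0 0) (W8.mk 1 0 (-1) 0 (-1) 0 0 0) (W8.mk 2 (-1) 0 (-1) (-1) (-1) 0 (-1)) (W8.mk 3 (-1) (-1) (-1) (-1) (-1) (-2) (-1)),Q4.mk (W8.mk 0 0 0 0 1 0 0 0) (W8.mk 1 0 (-1) 0 (-1) 0 0 0) (W8.mk 2 (-1) 0 (-1) (-1) 0 (-1) (-1)) (W8.mk 3 (-1) (-1) (-1) (-1) (-2) (-1) (-1)),Q4.mk (W8.mk 0 0 0 0 1 0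 0 0) (W8.mk 1 0 0 (-1) (-1) 0 0 0) (W8.mk 2 (-1) (-1) 0 (-1) (-1) (-1) 0) (W8.mk 3 (-1) (-1) (-1) (-1) (-1) (-1) (-2)),Q4.mk (W8.mk 0 0 0 0 1 0 0 0) (W8.mk 1 0 0 (-1) (-1) 0 0 0) (W8.mk 2 (-1) (-1) 0 (-1) (-1) 0 (-1)) (W8.mk 3 (-1) (-1) (-1) (-1) (-1) (-2) (-1)),Q4.mk (W8.mk 0 0 0 0 1 0 0 0) (W8.mk 1 0 0 (-1) (-1) 0 0 0) (W8.mk 2 (-1) (-1) 0 (-1) 0 (-1) (-1)) (W8.mk 3 (-1) (-1) (-1) (-1) (-2) (-1) (-1)),Q4.mk (W8.mk 0 0 0 0 1 0 0 0) (W8.mk 1 0 0 0 (-1) (-1) 0 0) (W8.mk 2 (-1) (-1) (-1) (-1) 0 (-1) 0) (W8.mk 3 (-1) (-1) (-1) (-1) (-1) (-1) (-2)),Q4.mk (W8.mk 0 0 0 0 1 0 0 0) (W8.mk 1 0 0 0 (-1) (-1) 0 0) (W8.mk 2 (-1) (-1) (-1) (-1) 0 0 (-1)) (W8.mk 3 (-1)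 (-1) (-1) (-1) (-1) (-2) (-1)),Q4.mk (W8.mk 0 0 0 0 1 0 0 0) (W8.mk 1 0 0 0 (-1) 0 (-1) 0) (W8.mk 2 (-1) (-1) (-1) (-1) (-1) 0 0) (W8.mk 3 (-1) (-1) (-1) (-1) (-1) (-1) (-2)),Q4.mk (W8.mk 0 0 0 0 1 0 0 0) (W8.mk 1 0 0 0 (-1) 0 (-1) 0) (W8.mk 2 (-1) (-1) (-1) (-1) 0 0 (-1)) (W8.mk 3 (-1) (-1) (-1) (-1) (-2) (-1) (-1)),Q4.mk (W8.mk 0 0 0 0 1 0 0 0) (W8.mk 1 0 0 0 (-1) 0 0 (-1)) (W8.mk 2 (-1) (-1) (-1) (-1) (-1) 0 0) (W8.mk 3 (-1) (-1) (-1) (-1) (-1) (-2) (-1)),Q4.mk (W8.mk 0 0 0 0 1 0 0 0) (W8.mk 1 0 0 0 (-1) 0 0 (-1)) (W8.mk 2 (-1) (-1) (-1) (-1) 0 (-1) 0) (W8.mk 3 (-1) (-1) (-1) (-1) (-2) (-1) (-1)),Q4.mk (W8.mk 0 0 0 0 1 0 0 0) (W8.mk 2 (-1) (-1) (-1) (-1)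 (-1) 0 0) (W8.mk 2 (-1) (-1) 0 (-1) 0 (-1) (-1)) (W8.mk 2 0 0 (-1) (-1) (-1) (-1) (-1)),Q4.mk (W8.mk 0 0 0 0 1 0 0 0) (W8.mk 2 (-1) (-1) (-1) (-1) (-1) 0 0) (W8.mk 2 (-1) 0 (-1) (-1) 0 (-1) (-1)) (W8.mk 2 0 (-1) 0 (-1) (-1) (-1) (-1)),Q4.mk (W8.mk 0 0 0 0 1 0 0 0) (W8.mk 2 (-1) (-1) (-1) (-1) (-1) 0 0) (W8.mk 2 (-1) 0 0 (-1) (-1) (-1) (-1)) (W8.mk 2 0 (-1) (-1) (-1) 0 (-1) (-1)),Q4.mk (W8.mk 0 0 0 0 1 0 0 0) (W8.mk 2 (-1) (-1) (-1) (-1) 0 (-1) 0) (W8.mk 2 (-1) (-1) 0 (-1) (-1) 0 (-1)) (W8.mk 2 0 0 (-1) (-1) (-1) (-1) (-1)),Q4.mk (W8.mk 0 0 0 0 1 0 0 0) (W8.mk 2 (-1) (-1) (-1) (-1) 0 (-1) 0) (W8.mk 2 (-1) 0 (-1) (-1) (-1) 0 (-1)) (W8.mk 2 0 (-1) 0 (-1)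 (-1) (-1) (-1)),Q4.mk (W8.mk 0 0 0 0 1 0 0 0) (W8.mk 2 (-1) (-1) (-1) (-1) 0 (-1) 0) (W8.mk 2 (-1) 0 0 (-1) (-1) (-1) (-1)) (W8.mk 2 0 (-1) (-1) (-1) (-1) 0 (-1)),Q4.mk (W8.mk 0 0 0 0 1 0 0 0) (W8.mk 2 (-1) (-1) (-1) (-1) 0 0 (-1)) (W8.mk 2 (-1) (-1) 0 (-1) (-1) (-1) 0) (W8.mk 2 0 0 (-1) (-1) (-1) (-1) (-1)),Q4.mk (W8.mk 0 0 0 0 1 0 0 0) (W8.mk 2 (-1) (-1) (-1) (-1) 0 0 (-1)) (W8.mk 2 (-1) 0 (-1) (-1) (-1) (-1) 0) (W8.mk 2 0 (-1) 0 (-1) (-1) (-1) (-1)),Q4.mk (W8.mk 0 0 0 0 1 0 0 0) (W8.mk 2 (-1) (-1) (-1) (-1) 0 0 (-1)) (W8.mk 2 (-1) 0 0 (-1) (-1) (-1) (-1)) (W8.mk 2 0 (-1) (-1) (-1) (-1) (-1) 0),Q4.mk (W8.mk 0 0 0 0 1 0 0 0) (W8.mk 2 (-1) (-1) 0 (-1)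 (-1) (-1) 0) (W8.mk 2 (-1) 0 (-1) (-1) (-1) 0 (-1)) (W8.mk 2 0 (-1) (-1) (-1) 0 (-1) (-1)),Q4.mk (W8.mk 0 0 0 0 1 0 0 0) (W8.mk 2 (-1) (-1) 0 (-1) (-1) (-1) 0) (W8.mk 2 (-1) 0 (-1) (-1) 0 (-1) (-1)) (W8.mk 2 0 (-1) (-1) (-1) (-1) 0 (-1)),Q4.mk (W8.mk 0 0 0 0 1 0 0 0) (W8.mk 2 (-1) (-1) 0 (-1) (-1) 0 (-1)) (W8.mk 2 (-1) 0 (-1) (-1) (-1) (-1) 0) (W8.mk 2 0 (-1) (-1) (-1) 0 (-1) (-1)),Q4.mk (W8.mk 0 0 0 0 1 0 0 0) (W8.mk 2 (-1) (-1) 0 (-1) (-1) 0 (-1)) (W8.mk 2 (-1) 0 (-1) (-1) 0 (-1) (-1)) (W8.mk 2 0 (-1) (-1) (-1) (-1) (-1) 0),Q4.mk (W8.mk 0 0 0 0 1 0 0 0) (W8.mk 2 (-1) (-1) 0 (-1) 0 (-1) (-1)) (W8.mk 2 (-1) 0 (-1) (-1) (-1) (-1) 0) (W8.mk 2 0 (-1)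 (-1) (-1) (-1) 0 (-1)),Q4.mk (W8.mk 0 0 0 0 1 0 0 0) (W8.mk 2 (-1) (-1) 0 (-1) 0 (-1) (-1)) (W8.mk 2 (-1) 0 (-1) (-1) (-1) 0 (-1)) (W8.mk 2 0 (-1) (-1) (-1) (-1) (-1) 0),Q4.mk (W8.mk 0 0 0 0 0 1 0 0) (W8.mk 1 (-1) 0 0 0 (-1) 0 0) (W8.mk 2 0 (-1) (-1) (-1) (-1) (-1) 0) (W8.mk 3 (-1) (-1) (-1) (-1) (-1) (-1) (-2)),Q4.mk (W8.mk 0 0 0 0 0 1 0 0) (W8.mk 1 (-1) 0 0 0 (-1) 0 0) (W8.mk 2 0 (-1) (-1) (-1) (-1) 0 (-1)) (W8.mk 3 (-1) (-1) (-1) (-1) (-1) (-2) (-1)),Q4.mk (W8.mk 0 0 0 0 0 1 0 0) (W8.mk 1 0 (-1) 0 0 (-1) 0 0) (W8.mk 2 (-1) 0 (-1) (-1) (-1) (-1) 0) (W8.mk 3 (-1) (-1) (-1) (-1) (-1) (-1) (-2)),Q4.mk (W8.mk 0 0 0 0 0 1 0 0) (W8.mk 1 0 (-1) 0 0 (-1)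 0 0) (W8.mk 2 (-1) 0 (-1) (-1) (-1) 0 (-1)) (W8.mk 3 (-1) (-1) (-1) (-1) (-1) (-2) (-1)),Q4.mk (W8.mk 0 0 0 0 0 1 0 0) (W8.mk 1 0 0 (-1) 0 (-1) 0 0) (W8.mk 2 (-1) (-1) 0 (-1) (-1) (-1) 0) (W8.mk 3 (-1) (-1) (-1) (-1) (-1) (-1) (-2)),Q4.mk (W8.mk 0 0 0 0 0 1 0 0) (W8.mk 1 0 0 (-1) 0 (-1) 0 0) (W8.mk 2 (-1) (-1) 0 (-1) (-1) 0 (-1)) (W8.mk 3 (-1) (-1) (-1) (-1) (-1) (-2) (-1)),Q4.mk (W8.mk 0 0 0 0 0 1 0 0) (W8.mk 1 0 0 0 (-1) (-1) 0 0) (W8.mk 2 (-1) (-1) (-1) 0 (-1) (-1) 0) (W8.mk 3 (-1) (-1) (-1) (-1) (-1) (-1) (-2)),Q4.mk (W8.mk 0 0 0 0 0 1 0 0) (W8.mk 1 0 0 0 (-1) (-1) 0 0) (W8.mk 2 (-1) (-1) (-1) 0 (-1) 0 (-1)) (W8.mk 3 (-1) (-1) (-1) (-1) (-1) (-2) (-1)),Q4.mk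 (W8.mk 0 0 0 0 0 1 0 0) (W8.mk 1 0 0 0 0 (-1) (-1) 0) (W8.mk 2 (-1) (-1) (-1) (-1) (-1) 0 0) (W8.mk 3 (-1) (-1) (-1) (-1) (-1) (-1) (-2)),Q4.mk (W8.mk 0 0 0 0 0 1 0 0) (W8.mk 1 0 0 0 0 (-1) 0 (-1)) (W8.mk 2 (-1) (-1) (-1) (-1) (-1) 0 0) (W8.mk 3 (-1) (-1) (-1) (-1) (-1) (-2) (-1)),Q4.mk (W8.mk 0 0 0 0 0 1 0 0) (W8.mk 2 (-1) (-1) (-1) (-1) (-1) 0 0) (W8.mk 2 (-1) (-1) 0 0 (-1) (-1) (-1)) (W8.mk 2 0 0 (-1) (-1) (-1) (-1) (-1)),Q4.mk (W8.mk 0 0 0 0 0 1 0 0) (W8.mk 2 (-1) (-1) (-1) (-1) (-1) 0 0) (W8.mk 2 (-1) 0 (-1) 0 (-1) (-1) (-1)) (W8.mk 2 0 (-1) 0 (-1) (-1) (-1) (-1)),Q4.mk (W8.mk 0 0 0 0 0 1 0 0) (W8.mk 2 (-1) (-1) (-1) (-1) (-1) 0 0) (W8.mk 2 (-1) 0 0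 (-1) (-1) (-1) (-1)) (W8.mk 2 0 (-1) (-1) 0 (-1) (-1) (-1)),Q4.mk (W8.mk 0 0 0 0 0 1 0 0) (W8.mk 2 (-1) (-1) (-1) 0 (-1) (-1) 0) (W8.mk 2 (-1) (-1) 0 (-1) (-1) 0 (-1)) (W8.mk 2 0 0 (-1) (-1) (-1) (-1) (-1)),Q4.mk (W8.mk 0 0 0 0 0 1 0 0) (W8.mk 2 (-1) (-1) (-1) 0 (-1) (-1) 0) (W8.mk 2 (-1) 0 (-1) (-1) (-1) 0 (-1)) (W8.mk 2 0 (-1) 0 (-1) (-1) (-1) (-1)),Q4.mk (W8.mk 0 0 0 0 0 1 0 0) (W8.mk 2 (-1) (-1) (-1) 0 (-1) (-1) 0) (W8.mk 2 (-1) 0 0 (-1) (-1) (-1) (-1)) (W8.mk 2 0 (-1) (-1) (-1) (-1) 0 (-1)),Q4.mk (W8.mk 0 0 0 0 0 1 0 0) (W8.mk 2 (-1) (-1) (-1) 0 (-1) 0 (-1)) (W8.mk 2 (-1) (-1) 0 (-1) (-1) (-1) 0) (W8.mk 2 0 0 (-1) (-1) (-1) (-1) (-1)),Q4.mk (W8.mk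 0 0 0 0 0 1 0 0) (W8.mk 2 (-1) (-1) (-1) 0 (-1) 0 (-1)) (W8.mk 2 (-1) 0 (-1) (-1) (-1) (-1) 0) (W8.mk 2 0 (-1) 0 (-1) (-1) (-1) (-1)),Q4.mk (W8.mk 0 0 0 0 0 1 0 0) (W8.mk 2 (-1) (-1) (-1) 0 (-1) 0 (-1)) (W8.mk 2 (-1) 0 0 (-1) (-1) (-1) (-1)) (W8.mk 2 0 (-1) (-1) (-1) (-1) (-1) 0),Q4.mk (W8.mk 0 0 0 0 0 1 0 0) (W8.mk 2 (-1) (-1) 0 (-1) (-1) (-1) 0) (W8.mk 2 (-1) 0 (-1) (-1) (-1) 0 (-1)) (W8.mk 2 0 (-1) (-1) 0 (-1) (-1) (-1)),Q4.mk (W8.mk 0 0 0 0 0 1 0 0) (W8.mk 2 (-1) (-1) 0 (-1) (-1) (-1) 0) (W8.mk 2 (-1) 0 (-1) 0 (-1) (-1) (-1)) (W8.mk 2 0 (-1) (-1) (-1) (-1) 0 (-1)),Q4.mk (W8.mk 0 0 0 0 0 1 0 0) (W8.mk 2 (-1) (-1) 0 (-1) (-1) 0 (-1)) (W8.mk 2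 (-1) 0 (-1) (-1) (-1) (-1) 0) (W8.mk 2 0 (-1) (-1) 0 (-1) (-1) (-1)),Q4.mk (W8.mk 0 0 0 0 0 1 0 0) (W8.mk 2 (-1) (-1) 0 (-1) (-1) 0 (-1)) (W8.mk 2 (-1) 0 (-1) 0 (-1) (-1) (-1)) (W8.mk 2 0 (-1) (-1) (-1) (-1) (-1) 0),Q4.mk (W8.mk 0 0 0 0 0 1 0 0) (W8.mk 2 (-1) (-1) 0 0 (-1) (-1) (-1)) (W8.mk 2 (-1) 0 (-1) (-1) (-1) (-1) 0) (W8.mk 2 0 (-1) (-1) (-1) (-1) 0 (-1)),Q4.mk (W8.mk 0 0 0 0 0 1 0 0) (W8.mk 2 (-1) (-1) 0 0 (-1) (-1) (-1)) (W8.mk 2 (-1) 0 (-1) (-1) (-1) 0 (-1)) (W8.mk 2 0 (-1) (-1) (-1) (-1) (-1) 0),Q4.mk (W8.mk 0 0 0 0 0 0 1 0) (W8.mk 1 (-1) 0 0 0 0 (-1) 0) (W8.mk 2 0 (-1) (-1) (-1) (-1) (-1) 0) (W8.mk 3 (-1) (-1) (-1) (-1) (-1) (-1) (-2)),Q4.mk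 (W8.mk 0 0 0 0 0 0 1 0) (W8.mk 1 0 (-1) 0 0 0 (-1) 0) (W8.mk 2 (-1) 0 (-1) (-1) (-1) (-1) 0) (W8.mk 3 (-1) (-1) (-1) (-1) (-1) (-1) (-2)),Q4.mk (W8.mk 0 0 0 0 0 0 1 0) (W8.mk 1 0 0 (-1) 0 0 (-1) 0) (W8.mk 2 (-1) (-1) 0 (-1) (-1) (-1) 0) (W8.mk 3 (-1) (-1) (-1) (-1) (-1) (-1) (-2)),Q4.mk (W8.mk 0 0 0 0 0 0 1 0) (W8.mk 1 0 0 0 (-1) 0 (-1) 0) (W8.mk 2 (-1) (-1) (-1) 0 (-1) (-1) 0) (W8.mk 3 (-1) (-1) (-1) (-1) (-1) (-1) (-2)),Q4.mk (W8.mk 0 0 0 0 0 0 1 0) (W8.mk 1 0 0 0 0 (-1) (-1) 0) (W8.mk 2 (-1) (-1) (-1) (-1) 0 (-1) 0) (W8.mk 3 (-1) (-1) (-1) (-1) (-1) (-1) (-2)),Q4.mk (W8.mk 0 0 0 0 0 0 1 0) (W8.mk 2 (-1) (-1) (-1) (-1) 0 (-1) 0) (W8.mk 2 (-1) (-1) 0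 0 (-1) (-1) (-1)) (W8.mk 2 0 0 (-1) (-1) (-1) (-1) (-1)),Q4.mk (W8.mk 0 0 0 0 0 0 1 0) (W8.mk 2 (-1) (-1) (-1) (-1) 0 (-1) 0) (W8.mk 2 (-1) 0 (-1) 0 (-1) (-1) (-1)) (W8.mk 2 0 (-1) 0 (-1) (-1) (-1) (-1)),Q4.mk (W8.mk 0 0 0 0 0 0 1 0) (W8.mk 2 (-1) (-1) (-1) (-1) 0 (-1) 0) (W8.mk 2 (-1) 0 0 (-1) (-1) (-1) (-1)) (W8.mk 2 0 (-1) (-1) 0 (-1) (-1) (-1)),Q4.mk (W8.mk 0 0 0 0 0 0 1 0) (W8.mk 2 (-1) (-1) (-1) 0 (-1) (-1) 0) (W8.mk 2 (-1) (-1) 0 (-1) 0 (-1) (-1)) (W8.mk 2 0 0 (-1) (-1) (-1) (-1) (-1)),Q4.mk (W8.mk 0 0 0 0 0 0 1 0) (W8.mk 2 (-1) (-1) (-1) 0 (-1) (-1) 0) (W8.mk 2 (-1) 0 (-1) (-1) 0 (-1) (-1)) (W8.mk 2 0 (-1) 0 (-1) (-1) (-1) (-1)),Q4.mk (W8.mk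 0 0 0 0 0 0 1 0) (W8.mk 2 (-1) (-1) (-1) 0 (-1) (-1) 0) (W8.mk 2 (-1) 0 0 (-1) (-1) (-1) (-1)) (W8.mk 2 0 (-1) (-1) (-1) 0 (-1) (-1)),Q4.mk (W8.mk 0 0 0 0 0 0 1 0) (W8.mk 2 (-1) (-1) (-1) 0 0 (-1) (-1)) (W8.mk 2 (-1) (-1) 0 (-1) (-1) (-1) 0) (W8.mk 2 0 0 (-1) (-1) (-1) (-1) (-1)),Q4.mk (W8.mk 0 0 0 0 0 0 1 0) (W8.mk 2 (-1) (-1) (-1) 0 0 (-1) (-1)) (W8.mk 2 (-1) 0 (-1) (-1) (-1) (-1) 0) (W8.mk 2 0 (-1) 0 (-1) (-1) (-1) (-1)),Q4.mk (W8.mk 0 0 0 0 0 0 1 0) (W8.mk 2 (-1) (-1) (-1) 0 0 (-1) (-1)) (W8.mk 2 (-1) 0 0 (-1) (-1) (-1) (-1)) (W8.mk 2 0 (-1) (-1) (-1) (-1) (-1) 0),Q4.mk (W8.mk 0 0 0 0 0 0 1 0) (W8.mk 2 (-1) (-1) 0 (-1) (-1) (-1) 0) (W8.mk 2 (-1) 0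 (-1) (-1) 0 (-1) (-1)) (W8.mk 2 0 (-1) (-1) 0 (-1) (-1) (-1)),Q4.mk (W8.mk 0 0 0 0 0 0 1 0) (W8.mk 2 (-1) (-1) 0 (-1) (-1) (-1) 0) (W8.mk 2 (-1) 0 (-1) 0 (-1) (-1) (-1)) (W8.mk 2 0 (-1) (-1) (-1) 0 (-1) (-1)),Q4.mk (W8.mk 0 0 0 0 0 0 1 0) (W8.mk 2 (-1) (-1) 0 (-1) 0 (-1) (-1)) (W8.mk 2 (-1) 0 (-1) (-1) (-1) (-1) 0) (W8.mk 2 0 (-1) (-1) 0 (-1) (-1) (-1)),Q4.mk (W8.mk 0 0 0 0 0 0 1 0) (W8.mk 2 (-1) (-1) 0 (-1) 0 (-1) (-1)) (W8.mk 2 (-1) 0 (-1) 0 (-1) (-1) (-1)) (W8.mk 2 0 (-1) (-1) (-1) (-1) (-1) 0),Q4.mk (W8.mk 0 0 0 0 0 0 1 0) (W8.mk 2 (-1) (-1) 0 0 (-1) (-1) (-1)) (W8.mk 2 (-1) 0 (-1) (-1) (-1) (-1) 0) (W8.mk 2 0 (-1) (-1) (-1) 0 (-1) (-1)),Q4.mk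 (W8.mk 0 0 0 0 0 0 1 0) (W8.mk 2 (-1) (-1) 0 0 (-1) (-1) (-1)) (W8.mk 2 (-1) 0 (-1) (-1) 0 (-1) (-1)) (W8.mk 2 0 (-1) (-1) (-1) (-1) (-1) 0),Q4.mk (W8.mk 0 0 0 0 0 0 0 1) (W8.mk 2 (-1) (-1) (-1) (-1) 0 0 (-1)) (W8.mk 2 (-1) (-1) 0 0 (-1) (-1) (-1)) (W8.mk 2 0 0 (-1) (-1) (-1) (-1) (-1)),Q4.mk (W8.mk 0 0 0 0 0 0 0 1) (W8.mk 2 (-1) (-1) (-1) (-1) 0 0 (-1)) (W8.mk 2 (-1) 0 (-1) 0 (-1) (-1) (-1)) (W8.mk 2 0 (-1) 0 (-1) (-1) (-1) (-1)),Q4.mk (W8.mk 0 0 0 0 0 0 0 1) (W8.mk 2 (-1) (-1) (-1) (-1) 0 0 (-1)) (W8.mk 2 (-1) 0 0 (-1) (-1) (-1) (-1)) (W8.mk 2 0 (-1) (-1) 0 (-1) (-1) (-1)),Q4.mk (W8.mk 0 0 0 0 0 0 0 1) (W8.mk 2 (-1) (-1) (-1) 0 (-1) 0 (-1)) (W8.mk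 2 (-1) (-1) 0 (-1) 0 (-1) (-1)) (W8.mk 2 0 0 (-1) (-1) (-1) (-1) (-1)),Q4.mk (W8.mk 0 0 0 0 0 0 0 1) (W8.mk 2 (-1) (-1) (-1) 0 (-1) 0 (-1)) (W8.mk 2 (-1) 0 (-1) (-1) 0 (-1) (-1)) (W8.mk 2 0 (-1) 0 (-1) (-1) (-1) (-1)),Q4.mk (W8.mk 0 0 0 0 0 0 0 1) (W8.mk 2 (-1) (-1) (-1) 0 (-1) 0 (-1)) (W8.mk 2 (-1) 0 0 (-1) (-1) (-1) (-1)) (W8.mk 2 0 (-1) (-1) (-1) 0 (-1) (-1)),Q4.mk (W8.mk 0 0 0 0 0 0 0 1) (W8.mk 2 (-1) (-1) (-1) 0 0 (-1) (-1)) (W8.mk 2 (-1) (-1) 0 (-1) (-1) 0 (-1)) (W8.mk 2 0 0 (-1) (-1) (-1) (-1) (-1)),Q4.mk (W8.mk 0 0 0 0 0 0 0 1) (W8.mk 2 (-1) (-1) (-1) 0 0 (-1) (-1)) (W8.mk 2 (-1) 0 (-1) (-1) (-1) 0 (-1)) (W8.mk 2 0 (-1) 0 (-1) (-1) (-1) (-1)),Q4.mk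 (W8.mk 0 0 0 0 0 0 0 1) (W8.mk 2 (-1) (-1) (-1) 0 0 (-1) (-1)) (W8.mk 2 (-1) 0 0 (-1) (-1) (-1) (-1)) (W8.mk 2 0 (-1) (-1) (-1) (-1) 0 (-1)),Q4.mk (W8.mk 0 0 0 0 0 0 0 1) (W8.mk 2 (-1) (-1) 0 (-1) (-1) 0 (-1)) (W8.mk 2 (-1) 0 (-1) (-1) 0 (-1) (-1)) (W8.mk 2 0 (-1) (-1) 0 (-1) (-1) (-1)),Q4.mk (W8.mk 0 0 0 0 0 0 0 1) (W8.mk 2 (-1) (-1) 0 (-1) (-1) 0 (-1)) (W8.mk 2 (-1) 0 (-1) 0 (-1) (-1) (-1)) (W8.mk 2 0 (-1) (-1) (-1) 0 (-1) (-1)),Q4.mk (W8.mk 0 0 0 0 0 0 0 1) (W8.mk 2 (-1) (-1) 0 (-1) 0 (-1) (-1)) (W8.mk 2 (-1) 0 (-1) (-1) (-1) 0 (-1)) (W8.mk 2 0 (-1) (-1) 0 (-1) (-1) (-1)),Q4.mk (W8.mk 0 0 0 0 0 0 0 1) (W8.mk 2 (-1) (-1) 0 (-1) 0 (-1) (-1))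 (W8.mk 2 (-1) 0 (-1) 0 (-1) (-1) (-1)) (W8.mk 2 0 (-1) (-1) (-1) (-1) 0 (-1)),Q4.mk (W8.mk 0 0 0 0 0 0 0 1) (W8.mk 2 (-1) (-1) 0 0 (-1) (-1) (-1)) (W8.mk 2 (-1) 0 (-1) (-1) (-1) 0 (-1)) (W8.mk 2 0 (-1) (-1) (-1) 0 (-1) (-1)),Q4.mk (W8.mk 0 0 0 0 0 0 0 1) (W8.mk 2 (-1) (-1) 0 0 (-1) (-1) (-1)) (W8.mk 2 (-1) 0 (-1) (-1) 0 (-1) (-1)) (W8.mk 2 0 (-1) (-1) (-1) (-1) 0 (-1)),Q4.mk (W8.mk 1 (-1) (-1) 0 0 0 0 0) (W8.mk 1 0 0 (-1) (-1) 0 0 0) (W8.mk 2 (-1) 0 (-1) 0 (-1) (-1) (-1)) (W8.mk 2 0 (-1) 0 (-1) (-1) (-1) (-1)),Q4.mk (W8.mk 1 (-1) (-1) 0 0 0 0 0) (W8.mk 1 0 0 (-1) (-1) 0 0 0) (W8.mk 2 (-1) 0 0 (-1) (-1) (-1) (-1)) (W8.mk 2 0 (-1) (-1) 0 (-1) (-1)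 (-1)),Q4.mk (W8.mk 1 (-1) (-1) 0 0 0 0 0) (W8.mk 1 0 0 (-1) 0 (-1) 0 0) (W8.mk 2 (-1) 0 (-1) (-1) 0 (-1) (-1)) (W8.mk 2 0 (-1) 0 (-1) (-1) (-1) (-1)),Q4.mk (W8.mk 1 (-1) (-1) 0 0 0 0 0) (W8.mk 1 0 0 (-1) 0 (-1) 0 0) (W8.mk 2 (-1) 0 0 (-1) (-1) (-1) (-1)) (W8.mk 2 0 (-1) (-1) (-1) 0 (-1) (-1)),Q4.mk (W8.mk 1 (-1) (-1) 0 0 0 0 0) (W8.mk 1 0 0 (-1) 0 0 (-1) 0) (W8.mk 2 (-1) 0 (-1) (-1) (-1) 0 (-1)) (W8.mk 2 0 (-1) 0 (-1) (-1) (-1) (-1)),Q4.mk (W8.mk 1 (-1) (-1) 0 0 0 0 0) (W8.mk 1 0 0 (-1) 0 0 (-1) 0) (W8.mk 2 (-1) 0 0 (-1) (-1) (-1) (-1)) (W8.mk 2 0 (-1) (-1) (-1) (-1) 0 (-1)),Q4.mk (W8.mk 1 (-1) (-1) 0 0 0 0 0) (W8.mk 1 0 0 (-1) 0 0 0 (-1))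 (W8.mk 2 (-1) 0 (-1) (-1) (-1) (-1) 0) (W8.mk 2 0 (-1) 0 (-1) (-1) (-1) (-1)),Q4.mk (W8.mk 1 (-1) (-1) 0 0 0 0 0) (W8.mk 1 0 0 (-1) 0 0 0 (-1)) (W8.mk 2 (-1) 0 0 (-1) (-1) (-1) (-1)) (W8.mk 2 0 (-1) (-1) (-1) (-1) (-1) 0),Q4.mk (W8.mk 1 (-1) (-1) 0 0 0 0 0) (W8.mk 1 0 0 0 (-1) (-1) 0 0) (W8.mk 2 (-1) 0 (-1) (-1) 0 (-1) (-1)) (W8.mk 2 0 (-1) (-1) 0 (-1) (-1) (-1)),Q4.mk (W8.mk 1 (-1) (-1) 0 0 0 0 0) (W8.mk 1 0 0 0 (-1) (-1) 0 0) (W8.mk 2 (-1) 0 (-1) 0 (-1) (-1) (-1)) (W8.mk 2 0 (-1) (-1) (-1) 0 (-1) (-1)),Q4.mk (W8.mk 1 (-1) (-1) 0 0 0 0 0) (W8.mk 1 0 0 0 (-1) 0 (-1) 0) (W8.mk 2 (-1) 0 (-1) (-1) (-1) 0 (-1)) (W8.mk 2 0 (-1) (-1) 0 (-1) (-1) (-1)),Q4.mk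 (W8.mk 1 (-1) (-1) 0 0 0 0 0) (W8.mk 1 0 0 0 (-1) 0 (-1) 0) (W8.mk 2 (-1) 0 (-1) 0 (-1) (-1) (-1)) (W8.mk 2 0 (-1) (-1) (-1) (-1) 0 (-1)),Q4.mk (W8.mk 1 (-1) (-1) 0 0 0 0 0) (W8.mk 1 0 0 0 (-1) 0 0 (-1)) (W8.mk 2 (-1) 0 (-1) (-1) (-1) (-1) 0) (W8.mk 2 0 (-1) (-1) 0 (-1) (-1) (-1)),Q4.mk (W8.mk 1 (-1) (-1) 0 0 0 0 0) (W8.mk 1 0 0 0 (-1) 0 0 (-1)) (W8.mk 2 (-1) 0 (-1) 0 (-1) (-1) (-1)) (W8.mk 2 0 (-1) (-1) (-1) (-1) (-1) 0),Q4.mk (W8.mk 1 (-1) (-1) 0 0 0 0 0) (W8.mk 1 0 0 0 0 (-1) (-1) 0) (W8.mk 2 (-1) 0 (-1) (-1) (-1) 0 (-1)) (W8.mk 2 0 (-1) (-1) (-1) 0 (-1) (-1)),Q4.mk (W8.mk 1 (-1) (-1) 0 0 0 0 0) (W8.mk 1 0 0 0 0 (-1) (-1) 0) (W8.mk 2 (-1)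 0 (-1) (-1) 0 (-1) (-1)) (W8.mk 2 0 (-1) (-1) (-1) (-1) 0 (-1)),Q4.mk (W8.mk 1 (-1) (-1) 0 0 0 0 0) (W8.mk 1 0 0 0 0 (-1) 0 (-1)) (W8.mk 2 (-1) 0 (-1) (-1) (-1) (-1) 0) (W8.mk 2 0 (-1) (-1) (-1) 0 (-1) (-1)),Q4.mk (W8.mk 1 (-1) (-1) 0 0 0 0 0) (W8.mk 1 0 0 0 0 (-1) 0 (-1)) (W8.mk 2 (-1) 0 (-1) (-1) 0 (-1) (-1)) (W8.mk 2 0 (-1) (-1) (-1) (-1) (-1) 0),Q4.mk (W8.mk 1 (-1) (-1) 0 0 0 0 0) (W8.mk 1 0 0 0 0 0 (-1) (-1)) (W8.mk 2 (-1) 0 (-1) (-1) (-1) (-1) 0) (W8.mk 2 0 (-1) (-1) (-1) (-1) 0 (-1)),Q4.mk (W8.mk 1 (-1) (-1) 0 0 0 0 0) (W8.mk 1 0 0 0 0 0 (-1) (-1)) (W8.mk 2 (-1) 0 (-1) (-1) (-1) 0 (-1)) (W8.mk 2 0 (-1) (-1) (-1) (-1) (-1) 0),Q4.mk (W8.mk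 1 (-1) 0 (-1) 0 0 0 0) (W8.mk 1 0 (-1) 0 (-1) 0 0 0) (W8.mk 2 (-1) 0 0 (-1) (-1) (-1) (-1)) (W8.mk 2 0 (-1) (-1) 0 (-1) (-1) (-1)),Q4.mk (W8.mk 1 (-1) 0 (-1) 0 0 0 0) (W8.mk 1 0 (-1) 0 0 (-1) 0 0) (W8.mk 2 (-1) 0 0 (-1) (-1) (-1) (-1)) (W8.mk 2 0 (-1) (-1) (-1) 0 (-1) (-1)),Q4.mk (W8.mk 1 (-1) 0 (-1) 0 0 0 0) (W8.mk 1 0 (-1) 0 0 0 (-1) 0) (W8.mk 2 (-1) 0 0 (-1) (-1) (-1) (-1)) (W8.mk 2 0 (-1) (-1) (-1) (-1) 0 (-1)),Q4.mk (W8.mk 1 (-1) 0 (-1) 0 0 0 0) (W8.mk 1 0 (-1) 0 0 0 0 (-1)) (W8.mk 2 (-1) 0 0 (-1) (-1) (-1) (-1)) (W8.mk 2 0 (-1) (-1) (-1) (-1) (-1) 0),Q4.mk (W8.mk 1 (-1) 0 (-1) 0 0 0 0) (W8.mk 1 0 0 0 (-1) (-1) 0 0) (W8.mk 2 (-1) (-1)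 0 (-1) 0 (-1) (-1)) (W8.mk 2 0 (-1) (-1) 0 (-1) (-1) (-1)),Q4.mk (W8.mk 1 (-1) 0 (-1) 0 0 0 0) (W8.mk 1 0 0 0 (-1) (-1) 0 0) (W8.mk 2 (-1) (-1) 0 0 (-1) (-1) (-1)) (W8.mk 2 0 (-1) (-1) (-1) 0 (-1) (-1)),Q4.mk (W8.mk 1 (-1) 0 (-1) 0 0 0 0) (W8.mk 1 0 0 0 (-1) 0 (-1) 0) (W8.mk 2 (-1) (-1) 0 (-1) (-1) 0 (-1)) (W8.mk 2 0 (-1) (-1) 0 (-1) (-1) (-1)),Q4.mk (W8.mk 1 (-1) 0 (-1) 0 0 0 0) (W8.mk 1 0 0 0 (-1) 0 (-1) 0) (W8.mk 2 (-1) (-1) 0 0 (-1) (-1) (-1)) (W8.mk 2 0 (-1) (-1) (-1) (-1) 0 (-1)),Q4.mk (W8.mk 1 (-1) 0 (-1) 0 0 0 0) (W8.mk 1 0 0 0 (-1) 0 0 (-1)) (W8.mk 2 (-1) (-1) 0 (-1) (-1) (-1) 0) (W8.mk 2 0 (-1) (-1) 0 (-1) (-1) (-1)),Q4.mk (W8.mk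 1 (-1) 0 (-1) 0 0 0 0) (W8.mk 1 0 0 0 (-1) 0 0 (-1)) (W8.mk 2 (-1) (-1) 0 0 (-1) (-1) (-1)) (W8.mk 2 0 (-1) (-1) (-1) (-1) (-1) 0),Q4.mk (W8.mk 1 (-1) 0 (-1) 0 0 0 0) (W8.mk 1 0 0 0 0 (-1) (-1) 0) (W8.mk 2 (-1) (-1) 0 (-1) (-1) 0 (-1)) (W8.mk 2 0 (-1) (-1) (-1) 0 (-1) (-1)),Q4.mk (W8.mk 1 (-1) 0 (-1) 0 0 0 0) (W8.mk 1 0 0 0 0 (-1) (-1) 0) (W8.mk 2 (-1) (-1) 0 (-1) 0 (-1) (-1)) (W8.mk 2 0 (-1) (-1) (-1) (-1) 0 (-1)),Q4.mk (W8.mk 1 (-1) 0 (-1) 0 0 0 0) (W8.mk 1 0 0 0 0 (-1) 0 (-1)) (W8.mk 2 (-1) (-1) 0 (-1) (-1) (-1) 0) (W8.mk 2 0 (-1) (-1) (-1) 0 (-1) (-1)),Q4.mk (W8.mk 1 (-1) 0 (-1) 0 0 0 0) (W8.mk 1 0 0 0 0 (-1) 0 (-1)) (W8.mk 2 (-1)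 (-1) 0 (-1) 0 (-1) (-1)) (W8.mk 2 0 (-1) (-1) (-1) (-1) (-1) 0),Q4.mk (W8.mk 1 (-1) 0 (-1) 0 0 0 0) (W8.mk 1 0 0 0 0 0 (-1) (-1)) (W8.mk 2 (-1) (-1) 0 (-1) (-1) (-1) 0) (W8.mk 2 0 (-1) (-1) (-1) (-1) 0 (-1)),Q4.mk (W8.mk 1 (-1) 0 (-1) 0 0 0 0) (W8.mk 1 0 0 0 0 0 (-1) (-1)) (W8.mk 2 (-1) (-1) 0 (-1) (-1) 0 (-1)) (W8.mk 2 0 (-1) (-1) (-1) (-1) (-1) 0),Q4.mk (W8.mk 1 (-1) 0 0 (-1) 0 0 0) (W8.mk 1 0 (-1) 0 0 (-1) 0 0) (W8.mk 2 (-1) 0 (-1) 0 (-1) (-1) (-1)) (W8.mk 2 0 (-1) (-1) (-1) 0 (-1) (-1)),Q4.mk (W8.mk 1 (-1) 0 0 (-1) 0 0 0) (W8.mk 1 0 (-1) 0 0 0 (-1) 0) (W8.mk 2 (-1) 0 (-1) 0 (-1) (-1) (-1)) (W8.mk 2 0 (-1) (-1) (-1) (-1) 0 (-1)),Q4.mk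 (W8.mk 1 (-1) 0 0 (-1) 0 0 0) (W8.mk 1 0 (-1) 0 0 0 0 (-1)) (W8.mk 2 (-1) 0 (-1) 0 (-1) (-1) (-1)) (W8.mk 2 0 (-1) (-1) (-1) (-1) (-1) 0),Q4.mk (W8.mk 1 (-1) 0 0 (-1) 0 0 0) (W8.mk 1 0 0 (-1) 0 (-1) 0 0) (W8.mk 2 (-1) (-1) 0 0 (-1) (-1) (-1)) (W8.mk 2 0 (-1) (-1) (-1) 0 (-1) (-1)),Q4.mk (W8.mk 1 (-1) 0 0 (-1) 0 0 0) (W8.mk 1 0 0 (-1) 0 0 (-1) 0) (W8.mk 2 (-1) (-1) 0 0 (-1) (-1) (-1)) (W8.mk 2 0 (-1) (-1) (-1) (-1) 0 (-1)),Q4.mk (W8.mk 1 (-1) 0 0 (-1) 0 0 0) (W8.mk 1 0 0 (-1) 0 0 0 (-1)) (W8.mk 2 (-1) (-1) 0 0 (-1) (-1) (-1)) (W8.mk 2 0 (-1) (-1) (-1) (-1) (-1) 0),Q4.mk (W8.mk 1 (-1) 0 0 (-1) 0 0 0) (W8.mk 1 0 0 0 0 (-1) (-1) 0) (W8.mk 2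 (-1) (-1) (-1) 0 (-1) 0 (-1)) (W8.mk 2 0 (-1) (-1) (-1) 0 (-1) (-1)),Q4.mk (W8.mk 1 (-1) 0 0 (-1) 0 0 0) (W8.mk 1 0 0 0 0 (-1) (-1) 0) (W8.mk 2 (-1) (-1) (-1) 0 0 (-1) (-1)) (W8.mk 2 0 (-1) (-1) (-1) (-1) 0 (-1)),Q4.mk (W8.mk 1 (-1) 0 0 (-1) 0 0 0) (W8.mk 1 0 0 0 0 (-1) 0 (-1)) (W8.mk 2 (-1) (-1) (-1) 0 (-1) (-1) 0) (W8.mk 2 0 (-1) (-1) (-1) 0 (-1) (-1)),Q4.mk (W8.mk 1 (-1) 0 0 (-1) 0 0 0) (W8.mk 1 0 0 0 0 (-1) 0 (-1)) (W8.mk 2 (-1) (-1) (-1) 0 0 (-1) (-1)) (W8.mk 2 0 (-1) (-1) (-1) (-1) (-1) 0),Q4.mk (W8.mk 1 (-1) 0 0 (-1) 0 0 0) (W8.mk 1 0 0 0 0 0 (-1) (-1)) (W8.mk 2 (-1) (-1) (-1) 0 (-1) (-1) 0) (W8.mk 2 0 (-1) (-1) (-1) (-1) 0 (-1)),Q4.mk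 (W8.mk 1 (-1) 0 0 (-1) 0 0 0) (W8.mk 1 0 0 0 0 0 (-1) (-1)) (W8.mk 2 (-1) (-1) (-1) 0 (-1) 0 (-1)) (W8.mk 2 0 (-1) (-1) (-1) (-1) (-1) 0),Q4.mk (W8.mk 1 (-1) 0 0 0 (-1) 0 0) (W8.mk 1 0 (-1) 0 0 0 (-1) 0) (W8.mk 2 (-1) 0 (-1) (-1) 0 (-1) (-1)) (W8.mk 2 0 (-1) (-1) (-1) (-1) 0 (-1)),Q4.mk (W8.mk 1 (-1) 0 0 0 (-1) 0 0) (W8.mk 1 0 (-1) 0 0 0 0 (-1)) (W8.mk 2 (-1) 0 (-1) (-1) 0 (-1) (-1)) (W8.mk 2 0 (-1) (-1) (-1) (-1) (-1) 0),Q4.mk (W8.mk 1 (-1) 0 0 0 (-1) 0 0) (W8.mk 1 0 0 (-1) 0 0 (-1) 0) (W8.mk 2 (-1) (-1) 0 (-1) 0 (-1) (-1)) (W8.mk 2 0 (-1) (-1) (-1) (-1) 0 (-1)),Q4.mk (W8.mk 1 (-1) 0 0 0 (-1) 0 0) (W8.mk 1 0 0 (-1) 0 0 0 (-1)) (W8.mk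 2 (-1) (-1) 0 (-1) 0 (-1) (-1)) (W8.mk 2 0 (-1) (-1) (-1) (-1) (-1) 0),Q4.mk (W8.mk 1 (-1) 0 0 0 (-1) 0 0) (W8.mk 1 0 0 0 (-1) 0 (-1) 0) (W8.mk 2 (-1) (-1) (-1) 0 0 (-1) (-1)) (W8.mk 2 0 (-1) (-1) (-1) (-1) 0 (-1)),Q4.mk (W8.mk 1 (-1) 0 0 0 (-1) 0 0) (W8.mk 1 0 0 0 (-1) 0 0 (-1)) (W8.mk 2 (-1) (-1) (-1) 0 0 (-1) (-1)) (W8.mk 2 0 (-1) (-1) (-1) (-1) (-1) 0),Q4.mk (W8.mk 1 (-1) 0 0 0 (-1) 0 0) (W8.mk 1 0 0 0 0 0 (-1) (-1)) (W8.mk 2 (-1) (-1) (-1) (-1) 0 (-1) 0) (W8.mk 2 0 (-1) (-1) (-1) (-1) 0 (-1)),Q4.mk (W8.mk 1 (-1) 0 0 0 (-1) 0 0) (W8.mk 1 0 0 0 0 0 (-1) (-1)) (W8.mk 2 (-1) (-1) (-1) (-1) 0 0 (-1)) (W8.mk 2 0 (-1) (-1) (-1) (-1) (-1) 0),Q4.mk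 (W8.mk 1 (-1) 0 0 0 0 (-1) 0) (W8.mk 1 0 (-1) 0 0 0 0 (-1)) (W8.mk 2 (-1) 0 (-1) (-1) (-1) 0 (-1)) (W8.mk 2 0 (-1) (-1) (-1) (-1) (-1) 0),Q4.mk (W8.mk 1 (-1) 0 0 0 0 (-1) 0) (W8.mk 1 0 0 (-1) 0 0 0 (-1)) (W8.mk 2 (-1) (-1) 0 (-1) (-1) 0 (-1)) (W8.mk 2 0 (-1) (-1) (-1) (-1) (-1) 0),Q4.mk (W8.mk 1 (-1) 0 0 0 0 (-1) 0) (W8.mk 1 0 0 0 (-1) 0 0 (-1)) (W8.mk 2 (-1) (-1) (-1) 0 (-1) 0 (-1)) (W8.mk 2 0 (-1) (-1) (-1) (-1) (-1) 0),Q4.mk (W8.mk 1 (-1) 0 0 0 0 (-1) 0) (W8.mk 1 0 0 0 0 (-1) 0 (-1)) (W8.mk 2 (-1) (-1) (-1) (-1) 0 0 (-1)) (W8.mk 2 0 (-1) (-1) (-1) (-1) (-1) 0),Q4.mk (W8.mk 1 0 (-1) (-1) 0 0 0 0) (W8.mk 1 0 0 0 (-1) (-1) 0 0) (W8.mk 2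 (-1) (-1) 0 (-1) 0 (-1) (-1)) (W8.mk 2 (-1) 0 (-1) 0 (-1) (-1) (-1)),Q4.mk (W8.mk 1 0 (-1) (-1) 0 0 0 0) (W8.mk 1 0 0 0 (-1) (-1) 0 0) (W8.mk 2 (-1) (-1) 0 0 (-1) (-1) (-1)) (W8.mk 2 (-1) 0 (-1) (-1) 0 (-1) (-1)),Q4.mk (W8.mk 1 0 (-1) (-1) 0 0 0 0) (W8.mk 1 0 0 0 (-1) 0 (-1) 0) (W8.mk 2 (-1) (-1) 0 (-1) (-1) 0 (-1)) (W8.mk 2 (-1) 0 (-1) 0 (-1) (-1) (-1)),Q4.mk (W8.mk 1 0 (-1) (-1) 0 0 0 0) (W8.mk 1 0 0 0 (-1) 0 (-1) 0) (W8.mk 2 (-1) (-1) 0 0 (-1) (-1) (-1)) (W8.mk 2 (-1) 0 (-1) (-1) (-1) 0 (-1)),Q4.mk (W8.mk 1 0 (-1) (-1) 0 0 0 0) (W8.mk 1 0 0 0 (-1) 0 0 (-1)) (W8.mk 2 (-1) (-1) 0 (-1) (-1) (-1) 0) (W8.mk 2 (-1) 0 (-1) 0 (-1) (-1) (-1)),Q4.mk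 (W8.mk 1 0 (-1) (-1) 0 0 0 0) (W8.mk 1 0 0 0 (-1) 0 0 (-1)) (W8.mk 2 (-1) (-1) 0 0 (-1) (-1) (-1)) (W8.mk 2 (-1) 0 (-1) (-1) (-1) (-1) 0),Q4.mk (W8.mk 1 0 (-1) (-1) 0 0 0 0) (W8.mk 1 0 0 0 0 (-1) (-1) 0) (W8.mk 2 (-1) (-1) 0 (-1) (-1) 0 (-1)) (W8.mk 2 (-1) 0 (-1) (-1) 0 (-1) (-1)),Q4.mk (W8.mk 1 0 (-1) (-1) 0 0 0 0) (W8.mk 1 0 0 0 0 (-1) (-1) 0) (W8.mk 2 (-1) (-1) 0 (-1) 0 (-1) (-1)) (W8.mk 2 (-1) 0 (-1) (-1) (-1) 0 (-1)),Q4.mk (W8.mk 1 0 (-1) (-1) 0 0 0 0) (W8.mk 1 0 0 0 0 (-1) 0 (-1)) (W8.mk 2 (-1) (-1) 0 (-1) (-1) (-1) 0) (W8.mk 2 (-1) 0 (-1) (-1) 0 (-1) (-1)),Q4.mk (W8.mk 1 0 (-1) (-1) 0 0 0 0) (W8.mk 1 0 0 0 0 (-1) 0 (-1)) (W8.mk 2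 (-1) (-1) 0 (-1) 0 (-1) (-1)) (W8.mk 2 (-1) 0 (-1) (-1) (-1) (-1) 0),Q4.mk (W8.mk 1 0 (-1) (-1) 0 0 0 0) (W8.mk 1 0 0 0 0 0 (-1) (-1)) (W8.mk 2 (-1) (-1) 0 (-1) (-1) (-1) 0) (W8.mk 2 (-1) 0 (-1) (-1) (-1) 0 (-1)),Q4.mk (W8.mk 1 0 (-1) (-1) 0 0 0 0) (W8.mk 1 0 0 0 0 0 (-1) (-1)) (W8.mk 2 (-1) (-1) 0 (-1) (-1) 0 (-1)) (W8.mk 2 (-1) 0 (-1) (-1) (-1) (-1) 0),Q4.mk (W8.mk 1 0 (-1) 0 (-1) 0 0 0) (W8.mk 1 0 0 (-1) 0 (-1) 0 0) (W8.mk 2 (-1) (-1) 0 0 (-1) (-1) (-1)) (W8.mk 2 (-1) 0 (-1) (-1) 0 (-1) (-1)),Q4.mk (W8.mk 1 0 (-1) 0 (-1) 0 0 0) (W8.mk 1 0 0 (-1) 0 0 (-1) 0) (W8.mk 2 (-1) (-1) 0 0 (-1) (-1) (-1)) (W8.mk 2 (-1) 0 (-1) (-1) (-1) 0 (-1)),Q4.mk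 (W8.mk 1 0 (-1) 0 (-1) 0 0 0) (W8.mk 1 0 0 (-1) 0 0 0 (-1)) (W8.mk 2 (-1) (-1) 0 0 (-1) (-1) (-1)) (W8.mk 2 (-1) 0 (-1) (-1) (-1) (-1) 0),Q4.mk (W8.mk 1 0 (-1) 0 (-1) 0 0 0) (W8.mk 1 0 0 0 0 (-1) (-1) 0) (W8.mk 2 (-1) (-1) (-1) 0 (-1) 0 (-1)) (W8.mk 2 (-1) 0 (-1) (-1) 0 (-1) (-1)),Q4.mk (W8.mk 1 0 (-1) 0 (-1) 0 0 0) (W8.mk 1 0 0 0 0 (-1) (-1) 0) (W8.mk 2 (-1) (-1) (-1) 0 0 (-1) (-1)) (W8.mk 2 (-1) 0 (-1) (-1) (-1) 0 (-1)),Q4.mk (W8.mk 1 0 (-1) 0 (-1) 0 0 0) (W8.mk 1 0 0 0 0 (-1) 0 (-1)) (W8.mk 2 (-1) (-1) (-1) 0 (-1) (-1) 0) (W8.mk 2 (-1) 0 (-1) (-1) 0 (-1) (-1)),Q4.mk (W8.mk 1 0 (-1) 0 (-1) 0 0 0) (W8.mk 1 0 0 0 0 (-1) 0 (-1)) (W8.mk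 2 (-1) (-1) (-1) 0 0 (-1) (-1)) (W8.mk 2 (-1) 0 (-1) (-1) (-1) (-1) 0),Q4.mk (W8.mk 1 0 (-1) 0 (-1) 0 0 0) (W8.mk 1 0 0 0 0 0 (-1) (-1)) (W8.mk 2 (-1) (-1) (-1) 0 (-1) (-1) 0) (W8.mk 2 (-1) 0 (-1) (-1) (-1) 0 (-1)),Q4.mk (W8.mk 1 0 (-1) 0 (-1) 0 0 0) (W8.mk 1 0 0 0 0 0 (-1) (-1)) (W8.mk 2 (-1) (-1) (-1) 0 (-1) 0 (-1)) (W8.mk 2 (-1) 0 (-1) (-1) (-1) (-1) 0),Q4.mk (W8.mk 1 0 (-1) 0 0 (-1) 0 0) (W8.mk 1 0 0 (-1) 0 0 (-1) 0) (W8.mk 2 (-1) (-1) 0 (-1) 0 (-1) (-1)) (W8.mk 2 (-1) 0 (-1) (-1) (-1) 0 (-1)),Q4.mk (W8.mk 1 0 (-1) 0 0 (-1) 0 0) (W8.mk 1 0 0 (-1) 0 0 0 (-1)) (W8.mk 2 (-1) (-1) 0 (-1) 0 (-1) (-1)) (W8.mk 2 (-1) 0 (-1) (-1) (-1) (-1)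 0),Q4.mk (W8.mk 1 0 (-1) 0 0 (-1) 0 0) (W8.mk 1 0 0 0 (-1) 0 (-1) 0) (W8.mk 2 (-1) (-1) (-1) 0 0 (-1) (-1)) (W8.mk 2 (-1) 0 (-1) (-1) (-1) 0 (-1)),Q4.mk (W8.mk 1 0 (-1) 0 0 (-1) 0 0) (W8.mk 1 0 0 0 (-1) 0 0 (-1)) (W8.mk 2 (-1) (-1) (-1) 0 0 (-1) (-1)) (W8.mk 2 (-1) 0 (-1) (-1) (-1) (-1) 0),Q4.mk (W8.mk 1 0 (-1) 0 0 (-1) 0 0) (W8.mk 1 0 0 0 0 0 (-1) (-1)) (W8.mk 2 (-1) (-1) (-1) (-1) 0 (-1) 0) (W8.mk 2 (-1) 0 (-1) (-1) (-1) 0 (-1)),Q4.mk (W8.mk 1 0 (-1) 0 0 (-1) 0 0) (W8.mk 1 0 0 0 0 0 (-1) (-1)) (W8.mk 2 (-1) (-1) (-1) (-1) 0 0 (-1)) (W8.mk 2 (-1) 0 (-1) (-1) (-1) (-1) 0),Q4.mk (W8.mk 1 0 (-1) 0 0 0 (-1) 0) (W8.mk 1 0 0 (-1) 0 0 0 (-1))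 (W8.mk 2 (-1) (-1) 0 (-1) (-1) 0 (-1)) (W8.mk 2 (-1) 0 (-1) (-1) (-1) (-1) 0),Q4.mk (W8.mk 1 0 (-1) 0 0 0 (-1) 0) (W8.mk 1 0 0 0 (-1) 0 0 (-1)) (W8.mk 2 (-1) (-1) (-1) 0 (-1) 0 (-1)) (W8.mk 2 (-1) 0 (-1) (-1) (-1) (-1) 0),Q4.mk (W8.mk 1 0 (-1) 0 0 0 (-1) 0) (W8.mk 1 0 0 0 0 (-1) 0 (-1)) (W8.mk 2 (-1) (-1) (-1) (-1) 0 0 (-1)) (W8.mk 2 (-1) 0 (-1) (-1) (-1) (-1) 0),Q4.mk (W8.mk 1 0 0 (-1) (-1) 0 0 0) (W8.mk 1 0 0 0 0 (-1) (-1) 0) (W8.mk 2 (-1) (-1) (-1) 0 (-1) 0 (-1)) (W8.mk 2 (-1) (-1) 0 (-1) 0 (-1) (-1)),Q4.mk (W8.mk 1 0 0 (-1) (-1) 0 0 0) (W8.mk 1 0 0 0 0 (-1) (-1) 0) (W8.mk 2 (-1) (-1) (-1) 0 0 (-1) (-1)) (W8.mk 2 (-1) (-1) 0 (-1) (-1)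 0 (-1)),Q4.mk (W8.mk 1 0 0 (-1) (-1) 0 0 0) (W8.mk 1 0 0 0 0 (-1) 0 (-1)) (W8.mk 2 (-1) (-1) (-1) 0 (-1) (-1) 0) (W8.mk 2 (-1) (-1) 0 (-1) 0 (-1) (-1)),Q4.mk (W8.mk 1 0 0 (-1) (-1) 0 0 0) (W8.mk 1 0 0 0 0 (-1) 0 (-1)) (W8.mk 2 (-1) (-1) (-1) 0 0 (-1) (-1)) (W8.mk 2 (-1) (-1) 0 (-1) (-1) (-1) 0),Q4.mk (W8.mk 1 0 0 (-1) (-1) 0 0 0) (W8.mk 1 0 0 0 0 0 (-1) (-1)) (W8.mk 2 (-1) (-1) (-1) 0 (-1) (-1) 0) (W8.mk 2 (-1) (-1) 0 (-1) (-1) 0 (-1)),Q4.mk (W8.mk 1 0 0 (-1) (-1) 0 0 0) (W8.mk 1 0 0 0 0 0 (-1) (-1)) (W8.mk 2 (-1) (-1) (-1) 0 (-1) 0 (-1)) (W8.mk 2 (-1) (-1) 0 (-1) (-1) (-1) 0),Q4.mk (W8.mk 1 0 0 (-1) 0 (-1) 0 0) (W8.mk 1 0 0 0 (-1) 0 (-1)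 0) (W8.mk 2 (-1) (-1) (-1) 0 0 (-1) (-1)) (W8.mk 2 (-1) (-1) 0 (-1) (-1) 0 (-1)),Q4.mk (W8.mk 1 0 0 (-1) 0 (-1) 0 0) (W8.mk 1 0 0 0 (-1) 0 0 (-1)) (W8.mk 2 (-1) (-1) (-1) 0 0 (-1) (-1)) (W8.mk 2 (-1) (-1) 0 (-1) (-1) (-1) 0),Q4.mk (W8.mk 1 0 0 (-1) 0 (-1) 0 0) (W8.mk 1 0 0 0 0 0 (-1) (-1)) (W8.mk 2 (-1) (-1) (-1) (-1) 0 (-1) 0) (W8.mk 2 (-1) (-1) 0 (-1) (-1) 0 (-1)),Q4.mk (W8.mk 1 0 0 (-1) 0 (-1) 0 0) (W8.mk 1 0 0 0 0 0 (-1) (-1)) (W8.mk 2 (-1) (-1) (-1) (-1) 0 0 (-1)) (W8.mk 2 (-1) (-1) 0 (-1) (-1) (-1) 0),Q4.mk (W8.mk 1 0 0 (-1) 0 0 (-1) 0) (W8.mk 1 0 0 0 (-1) 0 0 (-1)) (W8.mk 2 (-1) (-1) (-1) 0 (-1) 0 (-1)) (W8.mk 2 (-1) (-1) 0 (-1) (-1)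 (-1) 0),Q4.mk (W8.mk 1 0 0 (-1) 0 0 (-1) 0) (W8.mk 1 0 0 0 0 (-1) 0 (-1)) (W8.mk 2 (-1) (-1) (-1) (-1) 0 0 (-1)) (W8.mk 2 (-1) (-1) 0 (-1) (-1) (-1) 0),Q4.mk (W8.mk 1 0 0 0 (-1) (-1) 0 0) (W8.mk 1 0 0 0 0 0 (-1) (-1)) (W8.mk 2 (-1) (-1) (-1) (-1) 0 (-1) 0) (W8.mk 2 (-1) (-1) (-1) 0 (-1) 0 (-1)),Q4.mk (W8.mk 1 0 0 0 (-1) (-1) 0 0) (W8.mk 1 0 0 0 0 0 (-1) (-1)) (W8.mk 2 (-1) (-1) (-1) (-1) 0 0 (-1)) (W8.mk 2 (-1) (-1) (-1) 0 (-1) (-1) 0),Q4.mk (W8.mk 1 0 0 0 (-1) 0 (-1) 0) (W8.mk 1 0 0 0 0 (-1) 0 (-1)) (W8.mk 2 (-1) (-1) (-1) (-1) 0 0 (-1)) (W8.mk 2 (-1) (-1) (-1) 0 (-1) (-1) 0)]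

def KL : List (List ℕ) := [[0,6,7,17],[0,5,7,16],[0,4,7,15],[0,3,7,14],[0,2,7,13],[0,6,8,21],[0,5,8,20],[0,4,8,19],[0,3,8,18],[0,1,8,13],[0,6,9,24],[0,5,9,23],[0,4,9,22],[0,2,9,18],[0,1,9,14],[0,6,10,26],[0,5,10,25],[0,3,10,22],[0,2,10,19],[0,1,10,15],[0,6,11,27],[0,4,11,25],[0,3,11,23],[0,2,11,20],[0,1,11,16],[0,5,12,27],[0,4,12,26],[0,3,12,24],[0,2,12,21],[0,1,12,17],[0,13,22,27],[0,14,19,27],[0,15,18,27],[0,13,23,26],[0,14,20,26],[0,16,18,26],[0,13,24,25],[0,14,21,25],[0,17,18,25],[0,15,20,24],[0,16,19,24],[0,15,21,23],[0,17,19,23],[0,16,21,22],[0,17,20,22],[1,6,7,12],[1,5,7,11],[1,4,7,10],[1,3,7,9],[1,2,7,8],[1,6,13,21],[1,5,13,20],[1,4,13,19],[1,3,13,18],[1,6,14,24],[1,5,14,23],[1,4,14,22],[1,2,14,18],[1,6,15,26],[1,5,15,25],[1,3,15,22],[1,2,15,19],[1,6,16,27],[1,4,16,25],[1,3,16,23]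,[1,2,16,20],[1,5,17,27],[1,4,17,26],[1,3,17,24],[1,2,17,21],[1,8,22,27],[1,9,19,27],[1,10,18,27],[1,8,23,26],[1,9,20,26],[1,11,18,26],[1,8,24,25],[1,9,21,25],[1,12,18,25],[1,10,20,24],[1,11,19,24],[1,10,21,23],[1,12,19,23],[1,11,21,22],[1,12,20,22],[2,6,8,12],[2,5,8,11],[2,4,8,10],[2,3,8,9],[2,6,13,17],[2,5,13,16],[2,4,13,15],[2,3,13,14],[2,6,18,24],[2,5,18,23],[2,4,18,22],[2,6,19,26],[2,5,19,25],[2,3,19,22],[2,6,20,27],[2,4,20,25],[2,3,20,23],[2,5,21,27],[2,4,21,26],[2,3,21,24],[2,7,22,27],[2,9,15,27],[2,10,14,27],[2,7,23,26],[2,9,16,26],[2,11,14,26],[2,7,24,25],[2,9,17,25],[2,12,14,25],[2,10,16,24],[2,11,15,24],[2,10,17,23],[2,12,15,23],[2,11,17,22],[2,12,16,22],[3,6,9,12],[3,5,9,11],[3,4,9,10],[3,6,14,17],[3,5,14,16],[3,4,14,15],[3,6,18,21],[3,5,18,20],[3,4,18,19],[3,6,22,26],[3,5,22,25],[3,6,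23,27],[3,4,23,25],[3,5,24,27],[3,4,24,26],[3,7,19,27],[3,8,15,27],[3,10,13,27],[3,7,20,26],[3,8,16,26],[3,11,13,26],[3,7,21,25],[3,8,17,25],[3,12,13,25],[3,10,16,21],[3,11,15,21],[3,10,17,20],[3,12,15,20],[3,11,17,19],[3,12,16,19],[4,6,10,12],[4,5,10,11],[4,6,15,17],[4,5,15,16],[4,6,19,21],[4,5,19,20],[4,6,22,24],[4,5,22,23],[4,6,25,27],[4,5,26,27],[4,7,18,27],[4,8,14,27],[4,9,13,27],[4,7,20,24],[4,8,16,24],[4,11,13,24],[4,7,21,23],[4,8,17,23],[4,12,13,23],[4,9,16,21],[4,11,14,21],[4,9,17,20],[4,12,14,20],[4,11,17,18],[4,12,16,18],[5,6,11,12],[5,6,16,17],[5,6,20,21],[5,6,23,24],[5,6,25,26],[5,7,18,26],[5,8,14,26],[5,9,13,26],[5,7,19,24],[5,8,15,24],[5,10,13,24],[5,7,21,22],[5,8,17,22],[5,12,13,22],[5,9,15,21],[5,10,14,21],[5,9,17,19],[5,12,14,19],[5,10,17,18],[5,12,15,18],[6,7,18,25],[6,8,14,25],[6,9,13,25],[6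,7,19,23],[6,8,15,23],[6,10,13,23],[6,7,20,22],[6,8,16,22],[6,11,13,22],[6,9,15,20],[6,10,14,20],[6,9,16,19],[6,11,14,19],[6,10,16,18],[6,11,15,18],[7,8,14,18],[7,9,13,18],[7,8,15,19],[7,10,13,19],[7,8,16,20],[7,11,13,20],[7,8,17,21],[7,12,13,21],[7,9,15,22],[7,10,14,22],[7,9,16,23],[7,11,14,23],[7,9,17,24],[7,12,14,24],[7,10,16,25],[7,11,15,25],[7,10,17,26],[7,12,15,26],[7,11,17,27],[7,12,16,27],[8,9,13,14],[8,10,13,15],[8,11,13,16],[8,12,13,17],[8,9,19,22],[8,10,18,22],[8,9,20,23],[8,11,18,23],[8,9,21,24],[8,12,18,24],[8,10,20,25],[8,11,19,25],[8,10,21,26],[8,12,19,26],[8,11,21,27],[8,12,20,27],[9,10,14,15],[9,11,14,16],[9,12,14,17],[9,10,18,19],[9,11,18,20],[9,12,18,21],[9,10,23,25],[9,11,22,25],[9,10,24,26],[9,12,22,26],[9,11,24,27],[9,12,23,27],[10,11,15,16],[10,12,15,17],[10,11,19,20],[10,12,19,21],[10,11,22,23],[10,12,22,24],[10,11,26,2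7],[10,12,25,27],[11,12,16,17],[11,12,20,21],[11,12,23,24],[11,12,25,26],[13,14,19,22],[13,15,18,22],[13,14,20,23],[13,16,18,23],[13,14,21,24],[13,17,18,24],[13,15,20,25],[13,16,19,25],[13,15,21,26],[13,17,19,26],[13,16,21,27],[13,17,20,27],[14,15,18,19],[14,16,18,20],[14,17,18,21],[14,15,23,25],[14,16,22,25],[14,15,24,26],[14,17,22,26],[14,16,24,27],[14,17,23,27],[15,16,19,20],[15,17,19,21],[15,16,22,23],[15,17,22,24],[15,16,26,27],[15,17,25,27],[16,17,20,21],[16,17,23,24],[16,17,25,26],[18,19,23,25],[18,20,22,25],[18,19,24,26],[18,21,22,26],[18,20,24,27],[18,21,23,27],[19,20,22,23],[19,21,22,24],[19,20,26,27],[19,21,25,27],[20,21,23,24],[20,21,25,26],[22,23,26,27],[22,24,25,27],[23,24,25,26]]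

def repW (x : W8) : W8 := if x.a ≤ 1 then x else iotaW x
def cid (x : W8) : ℕ := rep28.idxOf (repW x)
def key4 (a b c d : W8) : List ℕ := List.insertionSort (· ≤ ·) [cid a, cid b, cid c, cid d]
def keyQ (q : Q4) : List ℕ := key4 q.p q.q q.r q.s

def g1 (a b c : W8) : List W8 → Bool
  | [] => true
  | d :: l => (if Bw a d = 1 ∧ Bw b d = 1 ∧ Bw c d = 1 then decide (key4 a b c d ∈ KL) else true)
      && g1 a b c l
def g2 (a b : W8) : List W8 → Bool
  | [] => true
  | c :: l => (if Bw a c = 1 ∧ Bw b c = 1 then g1 a b c l else true) && g2 a b l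
def g3 (a : W8) : List W8 → Bool
  | [] => true
  | b :: l => (if Bw a b = 1 then g2 a b l else true) && g3 a l
def g4 : List W8 → Bool
  | [] => true
  | a :: l => g3 a l && g4 l

/-! ### bridge lemmas -/

theorem B_expand (v w : V) : B v w =
    v 0 * w 0 - (v 1 * w 1 + v 2 * w 2 + v 3 * w 3 + v 4 * w 4 + v 5 * w 5 + v 6 * w 6 + v 7 * w 7) := by
  simp [B, Fin.sum_univ_seven]

theorem B_symm (v w : V) : B v w = B w v := by
  simp only [B_expand]; ring

theorem B_toV (x y : W8) : B (toV x) (toV y) = Bw x y := by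
  rw [B_expand]; rfl

theorem toV_inj {x y : W8} (h : toV x = toV y) : x = y := by
  have e : ∀ z : W8, z = ⟨toV z 0, toV z 1, toV z 2, toV z 3, toV z 4, toV z 5, toV z 6, toV z 7⟩ :=
    fun z => rfl
  rw [e x, e y, h]

theorem hh_eq : hh = toV hw := by rfl

theorem iota_apply (v : V) (i : Fin 8) : iota v i = B v hh * hh i - v i := by
  simp [iota]

theorem iota_toV (x : W8) : iota (toV x) = toV (iotaW x) := by
  funext i
  rw [iota_apply, hh_eq, B_toV]
  fin_cases i <;>
    first
      | (show Bw x hw * (3:ℤ) - x.a = 3*(Bw x hw) - x.a; ring)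
      | (show Bw x hw * (-1:ℤ) - x.b = -(Bw x hw) - x.b; ring)
      | (show Bw x hw * (-1:ℤ) - x.c = -(Bw x hw) - x.c; ring)
      | (show Bw x hw * (-1:ℤ) - x.d = -(Bw x hw) - x.d; ring)
      | (show Bw x hw * (-1:ℤ) - x.e = -(Bw x hw) - x.e; ring)
      | (show Bw x hw * (-1:ℤ) - x.f = -(Bw x hw) - x.f; ring)
      | (show Bw x hw * (-1:ℤ) - x.g = -(Bw x hw) - x.g; ring)
      | (show Bw x hw * (-1:ℤ) - x.h = -(Bw x hw) - x.h; ring)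

theorem eta8 (v : V) : v = toV ⟨v 0, v 1, v 2, v 3, v 4, v 5, v 6, v 7⟩ := by
  funext i; fin_cases i <;> rfl

theorem B_iota_right (v w : V) : B v (iota w) = B w hh * B v hh - B v w := by
  simp only [B_expand, iota_apply]; ring

theorem B_iota_hh (v : V) : B (iota v) hh = (B hh hh - 1) * B v hh := by
  simp only [B_expand, iota_apply]; ring

theorem Bhh : B hh hh = 2 := by
  rw [hh_eq, B_toV]; rfl

theorem iota_iota (v : V) : iota (iota v) = v := by
  funext i
  rw [iota_apply (iota v) i, B_iota_hh, Bhh, iota_apply]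
  ring

theorem iota_mem_L {v : V} (hv : v ∈ L) : iota v ∈ L := by
  obtain ⟨h1, h2⟩ := hv
  have hIh : B (iota v) hh = 1 := by rw [B_iota_hh, Bhh, h2]; ring
  have hIv : B (iota v) v = 2 := by
    rw [B_symm, B_iota_right, h1, h2]; ring
  constructor
  · rw [B_iota_right (iota v) v, h2, hIh, hIv]; ring
  · exact hIh

/-- the class map -/
def cls (v : V) : Set V := {v, iota v}

theorem cls_iota (v : V) : cls (iota v) = cls v := by
  unfold cls
  rw [iota_iota, Set.pair_comm]

theorem mem_cls (v : V) : v ∈ cls v := Or.inl rfl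

theorem cls_eq_iff {v w : V} : cls v = cls w ↔ v = w ∨ v = iota w := by
  constructor
  · intro h
    have : v ∈ cls w := h ▸ mem_cls v
    exact this
  · rintro (rfl | rfl)
    · rfl
    · exact cls_iota w

/-- two distinct members of a clique are in different classes -/
theorem clique_ne {v w : V} (hv : v ∈ L) (hw : w ∈ L) (h1 : B v w = 1) :
    v ≠ w ∧ cls v ≠ cls w := by
  have hne : v ≠ w := by
    intro h; subst h
    rw [hv.1] at h1
    exact absurd h1 (by decide)
  refine ⟨hne, ?_⟩
  intro h
  rcases cls_eq_iff.mp h with h' | h'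
  · exact hne h'
  · have e : B v (iota w) = B w hh * B v hh - B v w := B_iota_right v w
    rw [hw.2, hv.2, h1] at e
    have h0 : B v (iota w) = 0 := by rw [e]; ring
    rw [← h'] at h0
    rw [hv.1] at h0
    exact absurd h0 (by decide)

/-! ### classification of L -/

theorem sq_eq_self (z : ℤ) (e : z^2 = z) : z = 0 ∨ z = 1 := by
  rcases mul_eq_zero.mp (show z*(z-1) = 0 by nlinarith) with h'|h'
  · exact Or.inl h'
  · exact Or.inr (by omega)


theorem int_le_self_sq (z : ℤ) : z ≤ z^2 := by
  rcases le_or_gt z 0 with h|h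
  · nlinarith [sq_nonneg z]
  · nlinarith [mul_le_mul_of_nonneg_left (by linarith : (1:ℤ) ≤ z) (by linarith : (0:ℤ) ≤ z)]

theorem zero_one (z1 z2 z3 z4 z5 z6 z7 : ℤ)
    (h : z1^2+z2^2+z3^2+z4^2+z5^2+z6^2+z7^2 = z1+z2+z3+z4+z5+z6+z7) :
    (z1 = 0 ∨ z1 = 1) ∧ (z2 = 0 ∨ z2 = 1) ∧ (z3 = 0 ∨ z3 = 1) ∧ (z4 = 0 ∨ z4 = 1) ∧
    (z5 = 0 ∨ z5 = 1) ∧ (z6 = 0 ∨ z6 = 1) ∧ (z7 = 0 ∨ z7 = 1) := by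
  have k1 := int_le_self_sq z1
  have k2 := int_le_self_sq z2
  have k3 := int_le_self_sq z3
  have k4 := int_le_self_sq z4
  have k5 := int_le_self_sq z5
  have k6 := int_le_self_sq z6
  have k7 := int_le_self_sq z7
  exact ⟨sq_eq_self _ (by linarith), sq_eq_self _ (by linarith), sq_eq_self _ (by linarith),
    sq_eq_self _ (by linarith), sq_eq_self _ (by linarith), sq_eq_self _ (by linarith),
    sq_eq_self _ (by linarith)⟩

theorem class8 (a x1 x2 x3 x4 x5 x6 x7 : ℤ)
    (E1 : x1^2+x2^2+x3^2+x4^2+x5^2+x6^2+x7^2 = a^2 + 1) (E2 : x1+x2+x3+x4+x5+x6+x7 = 1 - 3*a) :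
    W8.mk a x1 x2 x3 x4 x5 x6 x7 ∈ Lw := by
  have hb : 2*a^2 - 6*a - 6 ≤ 0 := by nlinarith [sq_nonneg (x1-x2), sq_nonneg (x1-x3), sq_nonneg (x1-x4), sq_nonneg (x1-x5), sq_nonneg (x1-x6), sq_nonneg (x1-x7), sq_nonneg (x2-x3), sq_nonneg (x2-x4), sq_nonneg (x2-x5), sq_nonneg (x2-x6), sq_nonneg (x2-x7), sq_nonneg (x3-x4), sq_nonneg (x3-x5), sq_nonneg (x3-x6), sq_nonneg (x3-x7), sq_nonneg (x4-x5), sq_nonneg (x4-x6), sq_nonneg (x4-x7), sq_nonneg (x5-x6), sq_nonneg (x5-x7), sq_nonneg (x6-x7)]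
  have l1 : -4 ≤ 5*a := by nlinarith [sq_nonneg (a+1)]
  have l2 : 5*a ≤ 19 := by nlinarith [sq_nonneg (a-4)]
  have ha0 : 0 ≤ a := by omega
  have ha3 : a ≤ 3 := by omega
  interval_cases a
  · obtain ⟨c1,c2,c3,c4,c5,c6,c7⟩ := zero_one x1 x2 x3 x4 x5 x6 x7 (by linarith)
    rcases c1 with rfl|rfl <;> rcases c2 with rfl|rfl <;> rcases c3 with rfl|rfl <;>
      rcases c4 with rfl|rfl <;> rcases c5 with rfl|rfl <;> rcases c6 with rfl|rfl <;>
      rcases c7 with rfl|rfl <;> first | (exfalso; omega) | decide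
  · obtain ⟨c1,c2,c3,c4,c5,c6,c7⟩ := zero_one (-x1) (-x2) (-x3) (-x4) (-x5) (-x6) (-x7) (by nlinarith)
    have d1 : x1 = 0 ∨ x1 = -1 := by omega
    have d2 : x2 = 0 ∨ x2 = -1 := by omega
    have d3 : x3 = 0 ∨ x3 = -1 := by omega
    have d4 : x4 = 0 ∨ x4 = -1 := by omega
    have d5 : x5 = 0 ∨ x5 = -1 := by omega
    have d6 : x6 = 0 ∨ x6 = -1 := by omega
    have d7 : x7 = 0 ∨ x7 = -1 := by omega
    rcases d1 with rfl|rfl <;> rcases d2 with rfl|rfl <;> rcases d3 with rfl|rfl <;>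
      rcases d4 with rfl|rfl <;> rcases d5 with rfl|rfl <;> rcases d6 with rfl|rfl <;>
      rcases d7 with rfl|rfl <;> first | (exfalso; omega) | decide
  · obtain ⟨c1,c2,c3,c4,c5,c6,c7⟩ := zero_one (-x1) (-x2) (-x3) (-x4) (-x5) (-x6) (-x7) (by nlinarith)
    have d1 : x1 = 0 ∨ x1 = -1 := by omega
    have d2 : x2 = 0 ∨ x2 = -1 := by omega
    have d3 : x3 = 0 ∨ x3 = -1 := by omega
    have d4 : x4 = 0 ∨ x4 = -1 := by omega
    have d5 : x5 = 0 ∨ x5 = -1 := by omega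
    have d6 : x6 = 0 ∨ x6 = -1 := by omega
    have d7 : x7 = 0 ∨ x7 = -1 := by omega
    rcases d1 with rfl|rfl <;> rcases d2 with rfl|rfl <;> rcases d3 with rfl|rfl <;>
      rcases d4 with rfl|rfl <;> rcases d5 with rfl|rfl <;> rcases d6 with rfl|rfl <;>
      rcases d7 with rfl|rfl <;> first | (exfalso; omega) | decide
  · obtain ⟨c1,c2,c3,c4,c5,c6,c7⟩ := zero_one (-1-x1) (-1-x2) (-1-x3) (-1-x4) (-1-x5) (-1-x6) (-1-x7) (by nlinarith)
    have d1 : x1 = -1 ∨ x1 = -2 := by omega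
    have d2 : x2 = -1 ∨ x2 = -2 := by omega
    have d3 : x3 = -1 ∨ x3 = -2 := by omega
    have d4 : x4 = -1 ∨ x4 = -2 := by omega
    have d5 : x5 = -1 ∨ x5 = -2 := by omega
    have d6 : x6 = -1 ∨ x6 = -2 := by omega
    have d7 : x7 = -1 ∨ x7 = -2 := by omega
    rcases d1 with rfl|rfl <;> rcases d2 with rfl|rfl <;> rcases d3 with rfl|rfl <;>
      rcases d4 with rfl|rfl <;> rcases d5 with rfl|rfl <;> rcases d6 with rfl|rfl <;>
      rcases d7 with rfl|rfl <;> first | (exfalso; omega) | decide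

theorem Lmem {v : V} (hv : v ∈ L) : ∃ x ∈ Lw, v = toV x := by
  obtain ⟨h1, h2⟩ := hv
  rw [B_expand] at h1 h2
  have e : hh 0 = 3 ∧ hh 1 = -1 ∧ hh 2 = -1 ∧ hh 3 = -1 ∧ hh 4 = -1 ∧ hh 5 = -1 ∧ hh 6 = -1
      ∧ hh 7 = -1 := ⟨rfl,rfl,rfl,rfl,rfl,rfl,rfl,rfl⟩
  rw [e.1, e.2.1, e.2.2.1, e.2.2.2.1, e.2.2.2.2.1, e.2.2.2.2.2.1, e.2.2.2.2.2.2.1,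
    e.2.2.2.2.2.2.2] at h2
  refine ⟨⟨v 0, v 1, v 2, v 3, v 4, v 5, v 6, v 7⟩, ?_, eta8 v⟩
  apply class8
  · linear_combination -h1
  · linear_combination h2

/-! ### spec lemmas for the checker -/

theorem g1_spec {a b c : W8} : ∀ {l}, g1 a b c l = true → ∀ {d}, d ∈ l →
    Bw a d = 1 → Bw b d = 1 → Bw c d = 1 → key4 a b c d ∈ KL := by
  intro l
  induction l with
  | nil => intro _ d hd; cases hd
  | cons x l ih =>
    intro h d hd h1 h2 h3
    simp only [g1, Bool.and_eq_true] at h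
    rcases List.mem_cons.mp hd with rfl | hd'
    · have hx := h.1
      rw [if_pos ⟨h1, h2, h3⟩] at hx
      exact of_decide_eq_true hx
    · exact ih h.2 hd' h1 h2 h3

theorem g2_spec {a b : W8} : ∀ {l}, g2 a b l = true → ∀ {c d}, List.Sublist [c, d] l →
    Bw a c = 1 → Bw b c = 1 → Bw a d = 1 → Bw b d = 1 → Bw c d = 1 → key4 a b c d ∈ KL := by
  intro l
  induction l with
  | nil => intro _ c d hs; simp at hs
  | cons x l ih =>
    intro h c d hs h1 h2 h3 h4 h5
    simp only [g2, Bool.and_eq_true] at h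
    cases hs with
    | cons _ hs' => exact ih h.2 hs' h1 h2 h3 h4 h5
    | cons_cons _ hs' =>
      have hx := h.1
      rw [if_pos ⟨h1, h2⟩] at hx
      exact g1_spec hx (hs'.subset (by simp)) h3 h4 h5

theorem g3_spec {a : W8} : ∀ {l}, g3 a l = true → ∀ {b c d}, List.Sublist [b, c, d] l →
    Bw a b = 1 → Bw a c = 1 → Bw a d = 1 → Bw b c = 1 → Bw b d = 1 → Bw c d = 1 →
    key4 a b c d ∈ KL := by
  intro l
  induction l with
  | nil => intro _ b c d hs; simp at hs
  | cons x l ih =>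
    intro h b c d hs h1 h2 h3 h4 h5 h6
    simp only [g3, Bool.and_eq_true] at h
    cases hs with
    | cons _ hs' => exact ih h.2 hs' h1 h2 h3 h4 h5 h6
    | cons_cons _ hs' =>
      have hx := h.1
      rw [if_pos h1] at hx
      exact g2_spec hx hs' h2 h4 h3 h5 h6

theorem g4_spec : ∀ {l}, g4 l = true → ∀ {a b c d : W8}, List.Sublist [a, b, c, d] l →
    Bw a b = 1 → Bw a c = 1 → Bw a d = 1 → Bw b c = 1 → Bw b d = 1 → Bw c d = 1 →
    key4 a b c d ∈ KL := by
  intro l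
  induction l with
  | nil => intro _ a b c d hs; simp at hs
  | cons x l ih =>
    intro h a b c d hs h1 h2 h3 h4 h5 h6
    simp only [g4, Bool.and_eq_true] at h
    cases hs with
    | cons _ hs' => exact ih h.2 hs' h1 h2 h3 h4 h5 h6
    | cons_cons _ hs' => exact g3_spec h.1 hs' h1 h2 h3 h4 h5 h6

/-! ### decidable facts -/

theorem checkAll : g4 Lw = true := by decide

theorem dC1 : ∀ x ∈ Lw, Bw x x = -1 ∧ Bw x hw = 1 := by decide

theorem dC2 : ∀ x ∈ Lw, cid (iotaW x) = cid x := by decide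

theorem dC3 : ∀ x ∈ Lw, ∀ y ∈ Lw, cid x = cid y → y = x ∨ y = iotaW x := by decide

theorem dC4 : ∀ q ∈ Tq, (q.p ∈ Lw ∧ q.q ∈ Lw ∧ q.r ∈ Lw ∧ q.s ∈ Lw) ∧
    Bw q.p q.q = 1 ∧ Bw q.p q.r = 1 ∧ Bw q.p q.s = 1 ∧ Bw q.q q.r = 1 ∧ Bw q.q q.s = 1 ∧
    Bw q.r q.s = 1 := by decide

theorem dC5 : Tq.map keyQ = KL := by decide

theorem dC6 : KL.Nodup := by decide

theorem dC7 : Tq.length = 315 := by decide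

/-! ### consequences -/

theorem mem_Lw_L {x : W8} (hx : x ∈ Lw) : toV x ∈ L :=
  ⟨by rw [B_toV]; exact (dC1 x hx).1, by rw [hh_eq, B_toV]; exact (dC1 x hx).2⟩

theorem cid_cls {x y : W8} (hx : x ∈ Lw) (hy : y ∈ Lw) (h : cid x = cid y) :
    cls (toV y) = cls (toV x) := by
  rcases dC3 x hx y hy h with rfl | rfl
  · rfl
  · rw [← iota_toV, cls_iota]

theorem cid_eq_of_cls {x y : W8} (hy : y ∈ Lw) (h : cls (toV x) = cls (toV y)) :
    cid x = cid y := by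
  rcases cls_eq_iff.mp h with h' | h'
  · rw [toV_inj h']
  · rw [iota_toV] at h'
    rw [toV_inj h', dC2 y hy]

/-! ### tetrads -/

def IsTetrad (s : Finset V) : Prop :=
  ↑s ⊆ L ∧ s.card = 4 ∧ ∀ a ∈ s, ∀ b ∈ s, a ≠ b → B a b = 1

def qSet (q : Q4) : Finset V := {toV q.p, toV q.q, toV q.r, toV q.s}

def imgQ (q : Q4) : Set (Set V) := cls '' ↑(qSet q)

def Rset : Set (Set (Set V)) := {r | ∃ s : Finset V, IsTetrad s ∧ r = cls '' ↑s}

theorem clique_injOn {s : Finset V} (hL : ↑s ⊆ L)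
    (hp : ∀ a ∈ s, ∀ b ∈ s, a ≠ b → B a b = 1) : Set.InjOn cls ↑s := by
  intro u hu w hw h
  by_contra hne
  exact (clique_ne (hL hu) (hL hw) (hp u hu w hw hne)).2 h

theorem img_ncard {s : Finset V} (hL : ↑s ⊆ L)
    (hp : ∀ a ∈ s, ∀ b ∈ s, a ≠ b → B a b = 1) : (cls '' ↑s).ncard = s.card := by
  rw [Set.ncard_image_of_injOn (clique_injOn hL hp), Set.ncard_coe_finset]

theorem img_sub_Lbar {s : Finset V} (hL : ↑s ⊆ L) : cls '' ↑s ⊆ Lbar := by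
  rintro x ⟨v, hv, rfl⟩
  exact ⟨v, hL hv, rfl⟩

theorem Bw_symm (x y : W8) : Bw x y = Bw y x := by
  simp only [Bw]; ring

theorem tetrad_of_Tq {q : Q4} (hq : q ∈ Tq) : IsTetrad (qSet q) := by
  obtain ⟨⟨hp, hq', hr, hs⟩, h1, h2, h3, h4, h5, h6⟩ := dC4 q hq
  have Lp := mem_Lw_L hp
  have Lq := mem_Lw_L hq'
  have Lr := mem_Lw_L hr
  have Ls := mem_Lw_L hs
  have ne12 : toV q.p ≠ toV q.q := (clique_ne Lp Lq (by rw [B_toV]; exact h1)).1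
  have ne13 : toV q.p ≠ toV q.r := (clique_ne Lp Lr (by rw [B_toV]; exact h2)).1
  have ne14 : toV q.p ≠ toV q.s := (clique_ne Lp Ls (by rw [B_toV]; exact h3)).1
  have ne23 : toV q.q ≠ toV q.r := (clique_ne Lq Lr (by rw [B_toV]; exact h4)).1
  have ne24 : toV q.q ≠ toV q.s := (clique_ne Lq Ls (by rw [B_toV]; exact h5)).1
  have ne34 : toV q.r ≠ toV q.s := (clique_ne Lr Ls (by rw [B_toV]; exact h6)).1
  refine ⟨?_, ?_, ?_⟩
  · intro v hv
    rcases (by simpa [qSet] using hv : v = toV q.p ∨ v = toV q.q ∨ v = toV q.r ∨ v = toV q.s)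
      with rfl|rfl|rfl|rfl
    exacts [Lp, Lq, Lr, Ls]
  · rw [qSet, Finset.card_insert_of_notMem (by simp [ne12, ne13, ne14]),
      Finset.card_insert_of_notMem (by simp [ne23, ne24]),
      Finset.card_insert_of_notMem (by simp [ne34]), Finset.card_singleton]
  · intro u hu w hw hne
    simp only [qSet, Finset.mem_insert, Finset.mem_singleton] at hu hw
    rcases hu with rfl|rfl|rfl|rfl <;> rcases hw with rfl|rfl|rfl|rfl <;>
      first
        | exact absurd rfl hne
        | (rw [B_toV]; assumption)
        | (rw [B_symm, B_toV]; assumption)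

theorem list_lift : ∀ l : List V, (∀ v ∈ l, v ∈ L) →
    ∃ xs : List W8, l = xs.map toV ∧ ∀ x ∈ xs, x ∈ Lw := by
  intro l
  induction l with
  | nil => exact fun _ => ⟨[], rfl, by simp⟩
  | cons v l ih =>
    intro h
    obtain ⟨x, hx, rfl⟩ := Lmem (h v (by simp))
    obtain ⟨xs, rfl, hxs⟩ := ih (fun w hw => h w (by simp [hw]))
    refine ⟨x :: xs, rfl, ?_⟩
    intro y hy
    rcases List.mem_cons.mp hy with rfl | hy'
    · exact hx
    · exact hxs y hy'

theorem key4_perm {y1 y2 y3 y4 z1 z2 z3 z4 : W8}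
    (h : key4 y1 y2 y3 y4 = key4 z1 z2 z3 z4) :
    List.Perm [cid y1, cid y2, cid y3, cid y4] [cid z1, cid z2, cid z3, cid z4] :=
  (List.perm_insertionSort _ _).symm.trans
    (by rw [show List.insertionSort (· ≤ ·) [cid y1, cid y2, cid y3, cid y4]
          = key4 y1 y2 y3 y4 from rfl, h]
        exact List.perm_insertionSort _ _)

theorem key4_eq_of_perm {y1 y2 y3 y4 z1 z2 z3 z4 : W8}
    (h : List.Perm [cid y1, cid y2, cid y3, cid y4] [cid z1, cid z2, cid z3, cid z4]) :
    key4 y1 y2 y3 y4 = key4 z1 z2 z3 z4 :=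
  List.Perm.eq_of_pairwise'
    (List.pairwise_insertionSort _ _) (List.pairwise_insertionSort _ _)
    ((List.perm_insertionSort _ _).trans (h.trans (List.perm_insertionSort _ _).symm))

theorem len4 {α : Type} {ys : List α} (h : ys.length = 4) : ∃ a b c d, ys = [a, b, c, d] := by
  match ys, h with
  | [a, b, c, d], _ => exact ⟨a, b, c, d, rfl⟩

theorem img_sub {zs ws : List W8} (hz : ∀ z ∈ zs, z ∈ Lw) (hw : ∀ w ∈ ws, w ∈ Lw)
    (hsub : ∀ z ∈ zs, cid z ∈ ws.map cid) :
    cls '' {v | v ∈ zs.map toV} ⊆ cls '' {v | v ∈ ws.map toV} := by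
  rintro x ⟨v, hv, rfl⟩
  obtain ⟨z, hzmem, rfl⟩ := List.mem_map.mp hv
  obtain ⟨w, hwmem, hcw⟩ := List.mem_map.mp (hsub z hzmem)
  exact ⟨toV w, List.mem_map.mpr ⟨w, hwmem, rfl⟩, (cid_cls (hw w hwmem) (hz z hzmem) hcw).symm⟩

theorem qSet_coe (q : Q4) : (↑(qSet q) : Set V) = {v | v ∈ [q.p, q.q, q.r, q.s].map toV} := by
  ext v
  simp [qSet, or_assoc, eq_comm]

theorem tetrad_match {s : Finset V} (hs : IsTetrad s) : ∃ q ∈ Tq, cls '' ↑s = imgQ q := by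
  obtain ⟨hL, hcard, hpair⟩ := hs
  obtain ⟨xs, hmap, hxsLw⟩ := list_lift s.toList (fun v hv => hL (Finset.mem_coe.mpr
    (Finset.mem_toList.mp hv)))
  have hnd : xs.Nodup := by
    have h' := s.nodup_toList
    rw [hmap] at h'
    exact h'.of_map
  have hlen : xs.length = 4 := by
    have h' := congrArg List.length hmap
    simp only [Finset.length_toList, hcard, List.length_map] at h'
    omega
  have hmem : ∀ v, v ∈ s ↔ ∃ x ∈ xs, toV x = v := by
    intro v
    rw [← Finset.mem_toList, hmap, List.mem_map]
  have hBw : ∀ x ∈ xs, ∀ y ∈ xs, x ≠ y → Bw x y = 1 := by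
    intro x hx y hy hne
    have h1 : toV x ∈ s := (hmem _).mpr ⟨x, hx, rfl⟩
    have h2 : toV y ∈ s := (hmem _).mpr ⟨y, hy, rfl⟩
    have h3 := hpair _ h1 _ h2 (fun h => hne (toV_inj h))
    rwa [B_toV] at h3
  obtain ⟨ys, hyp, hysub⟩ := hnd.subperm (fun x hx => hxsLw x hx)
  have hylen : ys.length = 4 := by rw [hyp.length_eq, hlen]
  obtain ⟨y1, y2, y3, y4, rfl⟩ := len4 hylen
  have hymem : ∀ y ∈ [y1, y2, y3, y4], y ∈ xs := fun y hy => (hyp.mem_iff).mp hy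
  have hyLw : ∀ y ∈ [y1, y2, y3, y4], y ∈ Lw := fun y hy => hxsLw y (hymem y hy)
  have hynd : ([y1, y2, y3, y4] : List W8).Nodup := hyp.nodup_iff.mpr hnd
  have hne12 : y1 ≠ y2 := by simp at hynd; tauto
  have hne13 : y1 ≠ y3 := by simp at hynd; tauto
  have hne14 : y1 ≠ y4 := by simp at hynd; tauto
  have hne23 : y2 ≠ y3 := by simp at hynd; tauto
  have hne24 : y2 ≠ y4 := by simp at hynd; tauto
  have hne34 : y3 ≠ y4 := by simp at hynd; tauto
  have hkey : key4 y1 y2 y3 y4 ∈ KL :=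
    g4_spec checkAll hysub
      (hBw _ (hymem _ (by simp)) _ (hymem _ (by simp)) hne12)
      (hBw _ (hymem _ (by simp)) _ (hymem _ (by simp)) hne13)
      (hBw _ (hymem _ (by simp)) _ (hymem _ (by simp)) hne14)
      (hBw _ (hymem _ (by simp)) _ (hymem _ (by simp)) hne23)
      (hBw _ (hymem _ (by simp)) _ (hymem _ (by simp)) hne24)
      (hBw _ (hymem _ (by simp)) _ (hymem _ (by simp)) hne34)
  rw [← dC5] at hkey
  obtain ⟨q, hq, hqk⟩ := List.mem_map.mp hkey
  refine ⟨q, hq, ?_⟩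
  have hperm := key4_perm (show key4 q.p q.q q.r q.s = key4 y1 y2 y3 y4 from hqk)
  obtain ⟨⟨hqp, hqq, hqr, hqs⟩, _⟩ := dC4 q hq
  have hqLw : ∀ w ∈ [q.p, q.q, q.r, q.s], w ∈ Lw := by
    intro w hw
    rcases (by simpa using hw : w = q.p ∨ w = q.q ∨ w = q.r ∨ w = q.s) with rfl|rfl|rfl|rfl
    exacts [hqp, hqq, hqr, hqs]
  have hset : (↑s : Set V) = {v | v ∈ ([y1, y2, y3, y4] : List W8).map toV} := by
    ext v
    simp only [Finset.mem_coe, hmem, Set.mem_setOf_eq, List.mem_map]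
    constructor
    · rintro ⟨x, hx, rfl⟩
      exact ⟨x, (hyp.mem_iff).mpr hx, rfl⟩
    · rintro ⟨x, hx, rfl⟩
      exact ⟨x, (hyp.mem_iff).mp hx, rfl⟩
  rw [imgQ, qSet_coe, hset]
  apply Set.Subset.antisymm
  · apply img_sub hyLw hqLw
    intro z hz
    have h1 : cid z ∈ [cid y1, cid y2, cid y3, cid y4] := by
      rcases (by simpa using hz : z = y1 ∨ z = y2 ∨ z = y3 ∨ z = y4) with rfl|rfl|rfl|rfl <;>
        simp
    have h2 := (hperm.mem_iff).mpr h1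
    simpa using h2
  · apply img_sub hqLw hyLw
    intro z hz
    have h1 : cid z ∈ [cid q.p, cid q.q, cid q.r, cid q.s] := by
      rcases (by simpa using hz : z = q.p ∨ z = q.q ∨ z = q.r ∨ z = q.s) with rfl|rfl|rfl|rfl <;>
        simp
    have h2 := (hperm.mem_iff).mp h1
    simpa using h2

theorem imgQ_injOn : Set.InjOn imgQ {q | q ∈ Tq} := by
  intro q hq q' hq' h
  obtain ⟨⟨hqp, hqq, hqr, hqs⟩, hb1, hb2, hb3, hb4, hb5, hb6⟩ := dC4 q hq
  obtain ⟨⟨hqp', hqq', hqr', hqs'⟩, _⟩ := dC4 q' hq'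
  have hqLw : ∀ w ∈ [q.p, q.q, q.r, q.s], w ∈ Lw := by
    intro w hw
    rcases (by simpa using hw : w = q.p ∨ w = q.q ∨ w = q.r ∨ w = q.s) with rfl|rfl|rfl|rfl
    exacts [hqp, hqq, hqr, hqs]
  have hqLw' : ∀ w ∈ [q'.p, q'.q, q'.r, q'.s], w ∈ Lw := by
    intro w hw
    rcases (by simpa using hw : w = q'.p ∨ w = q'.q ∨ w = q'.r ∨ w = q'.s) with rfl|rfl|rfl|rfl
    exacts [hqp', hqq', hqr', hqs']
  have hsub : ∀ w ∈ [q.p, q.q, q.r, q.s], cid w ∈ [q'.p, q'.q, q'.r, q'.s].map cid := by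
    intro w hw
    have himg : cls (toV w) ∈ imgQ q' := by
      rw [← h]
      refine ⟨toV w, ?_, rfl⟩
      rw [qSet_coe]
      exact List.mem_map.mpr ⟨w, hw, rfl⟩
    obtain ⟨v, hv, hcls⟩ := himg
    rw [qSet_coe] at hv
    obtain ⟨w', hw', rfl⟩ := List.mem_map.mp hv
    have : cid w' = cid w := cid_eq_of_cls (hqLw w hw) hcls
    exact List.mem_map.mpr ⟨w', hw', this.symm ▸ rfl⟩
  have hcidnd : ([q.p, q.q, q.r, q.s].map cid).Nodup := by
    have key : ∀ x ∈ Lw, ∀ y ∈ Lw, Bw x y = 1 → cid x ≠ cid y := by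
      intro x hx y hy hB hcid
      exact (clique_ne (mem_Lw_L hx) (mem_Lw_L hy) (by rw [B_toV]; exact hB)).2
        (cid_cls hx hy hcid).symm
    show ([cid q.p, cid q.q, cid q.r, cid q.s]).Nodup
    refine List.Pairwise.cons ?_ (List.Pairwise.cons ?_ (List.Pairwise.cons ?_
      (List.pairwise_singleton _ _)))
    · intro n hn
      rcases (by simpa using hn : n = cid q.q ∨ n = cid q.r ∨ n = cid q.s) with rfl|rfl|rfl
      exacts [key _ hqp _ hqq hb1, key _ hqp _ hqr hb2, key _ hqp _ hqs hb3]
    · intro n hn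
      rcases (by simpa using hn : n = cid q.r ∨ n = cid q.s) with rfl|rfl
      exacts [key _ hqq _ hqr hb4, key _ hqq _ hqs hb5]
    · intro n hn
      rcases (by simpa using hn : n = cid q.s) with rfl
      exact key _ hqr _ hqs hb6
  have hsp : List.Subperm ([q.p, q.q, q.r, q.s].map cid) ([q'.p, q'.q, q'.r, q'.s].map cid) := by
    apply hcidnd.subperm
    intro n hn
    obtain ⟨w, hw, rfl⟩ := List.mem_map.mp hn
    exact hsub w hw
  have hperm := hsp.perm_of_length_le (by simp)
  have hkeyeq : keyQ q = keyQ q' := key4_eq_of_perm hperm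
  exact List.inj_on_of_nodup_map (dC5 ▸ dC6) hq hq' hkeyeq

theorem Rchar : Rset = imgQ '' {q | q ∈ Tq} := by
  ext r
  constructor
  · rintro ⟨s, hs, rfl⟩
    obtain ⟨q, hq, he⟩ := tetrad_match hs
    exact ⟨q, hq, he.symm⟩
  · rintro ⟨q, hq, rfl⟩
    exact ⟨qSet q, tetrad_of_Tq hq, rfl⟩

theorem Rncard : Rset.ncard = 315 := by
  have hTqNodup : Tq.Nodup := List.Nodup.of_map _ (dC5 ▸ dC6)
  rw [Rchar, Set.ncard_image_of_injOn imgQ_injOn]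
  have h1 : {q : Q4 | q ∈ Tq} = ↑Tq.toFinset := by ext q; simp
  rw [h1, Set.ncard_coe_finset, List.toFinset_card_of_nodup hTqNodup, dC7]

end Stmt8Aux

open Stmt8Aux in
/-- there is a collection R̄ of exactly 315 four-element subsets of L̄ such
that a 3-element subset of L̄ is liftable iff it is contained in a member of R̄. -/
theorem stmt8 :
    ∃ R : Set (Set (Set V)), R.ncard = 315 ∧
      (∀ r ∈ R, r ⊆ Lbar ∧ r.ncard = 4) ∧
      (∀ t : Set (Set V), t ⊆ Lbar → t.ncard = 3 →
        (Liftable t ↔ ∃ r ∈ R, t ⊆ r)) := by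
  classical
  refine ⟨Rset, Rncard, ?_, ?_⟩
  · rintro r ⟨s, hs, rfl⟩
    refine ⟨img_sub_Lbar hs.1, ?_⟩
    rw [img_ncard hs.1 hs.2.2, hs.2.1]
  · intro t htL ht3
    constructor
    · rintro ⟨s, ⟨hsL, hs3, hsp⟩, rfl⟩
      obtain ⟨a, b, c, hab, hac, hbc, rfl⟩ := Finset.card_eq_three.mp hs3
      have haL : a ∈ L := hsL (by simp)
      have hbL : b ∈ L := hsL (by simp)
      have hcL : c ∈ L := hsL (by simp)
      have Bab : B a b = 1 := hsp a (by simp) b (by simp) hab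
      have Bac : B a c = 1 := hsp a (by simp) c (by simp) hac
      have Bbc : B b c = 1 := hsp b (by simp) c (by simp) hbc
      set dv : V := fun i => 2 * hh i - a i - b i - c i with hdv
      have e1 : B dv dv = 4*B hh hh - 4*B a hh - 4*B b hh - 4*B c hh
          + B a a + B b b + B c c + 2*B a b + 2*B a c + 2*B b c := by
        simp only [B_expand, hdv]; ring
      have e2 : B dv hh = 2*B hh hh - B a hh - B b hh - B c hh := by
        simp only [B_expand, hdv]; ring
      have e3 : B dv a = 2*B a hh - B a a - B a b - B a c := by
        simp only [B_expand, hdv]; ring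
      have e4 : B dv b = 2*B b hh - B a b - B b b - B b c := by
        simp only [B_expand, hdv]; ring
      have e5 : B dv c = 2*B c hh - B a c - B b c - B c c := by
        simp only [B_expand, hdv]; ring
      have hdL : dv ∈ L := by
        constructor
        · rw [e1, Bhh, haL.1, hbL.1, hcL.1, haL.2, hbL.2, hcL.2, Bab, Bac, Bbc]; ring
        · rw [e2, Bhh, haL.2, hbL.2, hcL.2]; ring
      have hda : B dv a = 1 := by rw [e3, haL.1, haL.2, Bab, Bac]; ring
      have hdb : B dv b = 1 := by rw [e4, hbL.1, hbL.2, Bab, Bbc]; ring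
      have hdc : B dv c = 1 := by rw [e5, hcL.1, hcL.2, Bac, Bbc]; ring
      have had' : B a dv = 1 := by rw [B_symm]; exact hda
      have hbd' : B b dv = 1 := by rw [B_symm]; exact hdb
      have hcd' : B c dv = 1 := by rw [B_symm]; exact hdc
      have Bba : B b a = 1 := by rw [B_symm]; exact Bab
      have Bca : B c a = 1 := by rw [B_symm]; exact Bac
      have Bcb : B c b = 1 := by rw [B_symm]; exact Bbc
      have hndv : dv ∉ ({a, b, c} : Finset V) := by
        simp only [Finset.mem_insert, Finset.mem_singleton]
        push_neg
        exact ⟨(clique_ne hdL haL hda).1, (clique_ne hdL hbL hdb).1, (clique_ne hdL hcL hdc).1⟩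
      refine ⟨cls '' ↑(insert dv {a, b, c} : Finset V), ⟨insert dv {a, b, c}, ⟨?_, ?_, ?_⟩, rfl⟩, ?_⟩
      · intro v hv
        rcases Finset.mem_insert.mp hv with rfl | hv'
        · exact hdL
        · exact hsL hv'
      · rw [Finset.card_insert_of_notMem hndv, hs3]
      · intro u hu w hw hne
        simp only [Finset.mem_insert, Finset.mem_singleton] at hu hw
        rcases hu with rfl|rfl|rfl|rfl <;> rcases hw with rfl|rfl|rfl|rfl <;>
          first
            | exact absurd rfl hne
            | assumption
      · exact Set.image_mono (by exact_mod_cast Finset.subset_insert dv {a, b, c})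
    · rintro ⟨r, ⟨s, ⟨hsL, hs4, hsp⟩, rfl⟩, htr⟩
      set s₀ := s.filter (fun v => cls v ∈ t) with hs₀
      have hinj := clique_injOn hsL hsp
      have himg : cls '' ↑s₀ = t := by
        apply Set.Subset.antisymm
        · rintro x ⟨v, hv, rfl⟩
          exact (Finset.mem_filter.mp (Finset.mem_coe.mp hv)).2
        · intro x hx
          obtain ⟨v, hv, rfl⟩ := htr hx
          exact ⟨v, Finset.mem_coe.mpr (Finset.mem_filter.mpr ⟨Finset.mem_coe.mp hv, hx⟩), rfl⟩
      have hcard : s₀.card = 3 := by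
        have h' : (cls '' ↑s₀).ncard = s₀.card := by
          rw [Set.ncard_image_of_injOn (hinj.mono (by exact_mod_cast Finset.filter_subset _ s)),
            Set.ncard_coe_finset]
        rw [himg, ht3] at h'
        omega
      refine ⟨s₀, ⟨?_, hcard, ?_⟩, himg.symm⟩
      · intro v hv
        exact hsL (Finset.mem_coe.mpr (Finset.filter_subset _ s (Finset.mem_coe.mp hv)))
      · intro u hu w hw hne
        exact hsp u (Finset.filter_subset _ s hu) w (Finset.filter_subset _ s hw) hne
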